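/- arXiv:1401.2751 — 9 statements merged into one kernel-verified Lean document; each statement's English description precedes it below -/
import Mathlib

section
/- Suppose the projection functors U_𝐆 : PAttG ⥤ 𝐆 and U_𝐀 : PAttG ⥤ 𝐀 and the functors S : 𝐆 ⥤ Type and T : 𝐀 ⥤ Type all preserve pullbacks, and that S preserves pushouts. Let ((l, id_A), (r, id_A)) be a rewriting rule with attributes in A, with structures (L, A, att_L), (K, A, att_K), (R, A, att_R), and let (m_L, a) : (L, A, att_L) → (G, A₁, att_G) be a matching. If, in 𝐆, the square given by m_K : K → D and l₁ : D → G is a final pullback complement of m_L along l, and the square given by m_R : R → H and r₁ : D → H is a pushout of r : K → R and m_K : K → D, then there exist partial functions att_D : S(D) ⇀ T(A₁) and att_H : S(H) ⇀ T(A₁) such that, in PAttG, the square given by (m_K, a) : (K, A, att_K) → (D, A₁, att_D) and (l₁, id_{A₁}) : (D, A₁, att_D) → (G, A₁, att_G) is a final pullback complement of (m_L, a) along (l, id_A), the square given by (m_R, a) : (R, A, att_R) → (H, A₁, att_H) and (r₁, id_{A₁}) : (D, A₁, att_D) → (H, A₁, att_H) is a pushout of (r, id_A) and (m_K, a), and (m_R,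 a) is a matching. -/
open CategoryTheory CategoryTheory.Limits

universe w v u v' u'

namespace AttStruct

variable {𝒢 : Type u} [Category.{v} 𝒢] {𝒜 : Type u'} [Category.{v'} 𝒜]

/-- A partially attributed structure. -/
structure PAttGObj (S : 𝒢 ⥤ Type w) (T : 𝒜 ⥤ Type w) : Type _ where
  base : 𝒢
  attr : 𝒜
  att : S.obj base →. T.obj attr

variable {S : 𝒢 ⥤ Type w} {T : 𝒜 ⥤ Type w}

/-- A morphism of partially attributed structures. -/
@[ext]
structure PAttGHom (X Y : PAttGObj S T) : Type _ where
  g : X.base ⟶ Y.base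
  a : X.attr ⟶ Y.attr
  cond : ∀ (x : S.obj X.base) (t : T.obj X.attr), t ∈ X.att x →
    T.map a t ∈ Y.att (S.map g x)

instance : Category (PAttGObj S T) where
  Hom := PAttGHom
  id X := ⟨𝟙 X.base, 𝟙 X.attr, by intro x t ht; simpa using ht⟩
  comp {X Y Z} f g := ⟨f.g ≫ g.g, f.a ≫ g.a, by
    intro x t ht
    have h2 := PAttGHom.cond g _ _ (PAttGHom.cond f x t ht)
    simpa [FunctorToTypes.map_comp_apply] using h2⟩
  id_comp f := by apply PAttGHom.ext <;> simp
  comp_id f := by apply PAttGHom.ext <;> simp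
  assoc f g h := by apply PAttGHom.ext <;> simp


@[simp] lemma PAttGHom.id_g (X : PAttGObj S T) : PAttGHom.g (𝟙 X) = 𝟙 X.base := rfl
@[simp] lemma PAttGHom.id_a (X : PAttGObj S T) : PAttGHom.a (𝟙 X) = 𝟙 X.attr := rfl
@[simp] lemma PAttGHom.comp_g {X Y Z : PAttGObj S T} (f : X ⟶ Y) (g : Y ⟶ Z) :
    PAttGHom.g (f ≫ g) = PAttGHom.g f ≫ PAttGHom.g g := rfl
@[simp] lemma PAttGHom.comp_a {X Y Z : PAttGObj S T} (f : X ⟶ Y) (g : Y ⟶ Z) :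
    PAttGHom.a (f ≫ g) = PAttGHom.a f ≫ PAttGHom.a g := rfl

/-- A morphism is strict if attributes are reflected as well as preserved. -/
def PAttGHom.Strict {X Y : PAttGObj S T} (f : PAttGHom X Y) : Prop :=
  ∀ x : S.obj X.base, Y.att (S.map f.g x) = (X.att x).map (T.map f.a)

/-- A matching is a strict morphism which is injective on structures. -/
def PAttGHom.Matching {X Y : PAttGObj S T} (f : PAttGHom X Y) : Prop :=
  f.Strict ∧ Function.Injective (S.map f.g)

/-- The underlying-structure projection functor. -/
def UG (S : 𝒢 ⥤ Type w) (T : 𝒜 ⥤ Type w) : PAttGObj S T ⥤ 𝒢 where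
  obj X := X.base
  map f := f.g

/-- The underlying-attributes projection functor. -/
def UA (S : 𝒢 ⥤ Type w) (T : 𝒜 ⥤ Type w) : PAttGObj S T ⥤ 𝒜 where
  obj X := X.attr
  map f := f.a

/-- Final pullback complement. -/
structure IsFPBC {𝒞 : Type*} [Category 𝒞] {K L D G : 𝒞}
    (l : K ⟶ L) (mL : L ⟶ G) (mK : K ⟶ D) (l₁ : D ⟶ G) : Prop where
  isPullback : IsPullback l mK mL l₁
  final : ∀ {K' D' : 𝒞} (l' : K' ⟶ L) (m' : K' ⟶ D') (l'₁ : D' ⟶ G),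
    IsPullback l' m' mL l'₁ → ∀ f : K' ⟶ K, f ≫ l = l' →
      ∃! f₁ : D' ⟶ D, f₁ ≫ l₁ = l'₁ ∧ m' ≫ f₁ = f ≫ mK



section TypeHelpers

/-- Elementwise universal property of a pullback square in `Type`. -/
lemma typePullback_existsUnique {P X Y Z : Type w} {fst : P ⟶ X} {snd : P ⟶ Y}
    {f : X ⟶ Z} {g : Y ⟶ Z} (h : IsPullback (C := Type w) fst snd f g)
    (x : X) (y : Y) (hxy : f x = g y) : ∃! p : P, fst p = x ∧ snd p = y := by
  let xm : PUnit.{w + 1} ⟶ X := TypeCat.ofHom fun _ => x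
  let ym : PUnit.{w + 1} ⟶ Y := TypeCat.ofHom fun _ => y
  have w : xm ≫ f = ym ≫ g := by ext; exact hxy
  refine ⟨h.lift xm ym w PUnit.unit, ⟨?_, ?_⟩, ?_⟩
  · exact types_congr_hom (h.lift_fst xm ym w) PUnit.unit
  · exact types_congr_hom (h.lift_snd xm ym w) PUnit.unit
  · intro p hp
    have := h.hom_ext (k := TypeCat.ofHom fun _ : PUnit.{w + 1} => p) (l := h.lift xm ym w)
      (by ext; simpa [types_comp_apply] using
        (hp.1.trans (types_congr_hom (h.lift_fst xm ym w) PUnit.unit).symm))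
      (by ext; simpa [types_comp_apply] using
        (hp.2.trans (types_congr_hom (h.lift_snd xm ym w) PUnit.unit).symm))
    exact types_congr_hom this PUnit.unit

/-- The two legs of a pushout square in `Type` are jointly surjective. -/
lemma typePushout_jointlySurjective {C A B P : Type w} {f : C ⟶ A} {g : C ⟶ B}
    {a : A ⟶ P} {b : B ⟶ P} (h : IsPushout (C := Type w) f g a b) (p : P) :
    (∃ x, a x = p) ∨ (∃ y, b y = p) := by
  classical
  let χ : P ⟶ ULift.{w} Bool := TypeCat.ofHom fun q =>
    ULift.up (if (∃ x, a x = q) ∨ (∃ y, b y = q) then true else false)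
  let ψ : P ⟶ ULift.{w} Bool := TypeCat.ofHom fun _ => ULift.up true
  have hχψ : χ = ψ := by
    apply h.hom_ext
    · refine ConcreteCategory.hom_ext _ _ fun x => ?_
      simp only [types_comp_apply, χ, ψ, TypeCat.ofHom_apply]
      rw [if_pos (Or.inl ⟨x, rfl⟩)]
    · refine ConcreteCategory.hom_ext _ _ fun y => ?_
      simp only [types_comp_apply, χ, ψ, TypeCat.ofHom_apply]
      rw [if_pos (Or.inr ⟨y, rfl⟩)]
  have := types_congr_hom hχψ p
  simp only [χ, ψ, TypeCat.ofHom_apply] at this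
  by_contra hcon
  rw [if_neg hcon] at this
  exact Bool.false_ne_true (congrArg ULift.down this)

/-- Elementwise facts about a pushout square in `Type` whose left leg is injective. -/
lemma typePushout_inj_facts {C A B P : Type w} {f : C ⟶ A} {g : C ⟶ B}
    {a : A ⟶ P} {b : B ⟶ P} (h : IsPushout (C := Type w) f g a b)
    (hg : Function.Injective g) :
    Function.Injective a ∧
    (∀ x y, a x = b y → ∃ c, f c = x ∧ g c = y) ∧
    (∀ y y', b y = b y' → y = y' ∨ ∃ c c', g c = y ∧ g c' = y' ∧ f c = f c') := by
  classical
  let Z : Type w := A ⊕ {y : B // ¬ ∃ c, g c = y}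
  let φa : A ⟶ Z := TypeCat.ofHom Sum.inl
  let φb : B ⟶ Z := TypeCat.ofHom fun y =>
    if hc : ∃ c, g c = y then Sum.inl (f hc.choose) else Sum.inr ⟨y, hc⟩
  have hcomm : f ≫ φa = g ≫ φb := by
    refine ConcreteCategory.hom_ext _ _ fun c => ?_
    have hc : ∃ c', g c' = g c := ⟨c, rfl⟩
    simp only [types_comp_apply, φa, φb, TypeCat.ofHom_apply]
    rw [dif_pos hc, hg hc.choose_spec]
  let φ : P ⟶ Z := h.desc φa φb hcomm
  have ha : ∀ x, φ (a x) = φa x := fun x => types_congr_hom (h.inl_desc φa φb hcomm) x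
  have hb : ∀ y, φ (b y) = φb y := fun y => types_congr_hom (h.inr_desc φa φb hcomm) y
  refine ⟨?_, ?_, ?_⟩
  · intro x x' hxx
    have : φa x = φa x' := by rw [← ha, ← ha, hxx]
    exact Sum.inl.inj this
  · intro x y hxy
    have hz : φa x = φb y := by rw [← ha, ← hb, hxy]
    by_cases hc : ∃ c, g c = y
    · refine ⟨hc.choose, ?_, hc.choose_spec⟩
      have : φb y = Sum.inl (f hc.choose) := dif_pos hc
      rw [this] at hz
      exact (Sum.inl.inj hz).symm
    · have : φb y = Sum.inr ⟨y, hc⟩ := dif_neg hc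
      rw [this] at hz
      exact absurd hz (by simp [φa])
  · intro y y' hyy
    have hz : φb y = φb y' := by rw [← hb, ← hb, hyy]
    simp only [φb, TypeCat.ofHom_apply] at hz
    by_cases hc : ∃ c, g c = y <;> by_cases hc' : ∃ c, g c = y'
    · refine Or.inr ⟨hc.choose, hc'.choose, hc.choose_spec, hc'.choose_spec, ?_⟩
      rw [dif_pos hc, dif_pos hc'] at hz
      exact Sum.inl.inj hz
    · rw [dif_pos hc, dif_neg hc'] at hz
      exact absurd hz (by simp)
    · rw [dif_neg hc, dif_pos hc'] at hz
      exact absurd hz (by simp)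
    · rw [dif_neg hc, dif_neg hc'] at hz
      exact Or.inl (congrArg Subtype.val (Sum.inr.inj hz))

end TypeHelpers

/-- Lifting of sesqui-pushout rewriting steps from `𝒢` to `PAttG`: given a rewriting
rule `((l, 𝟙 A), (r, 𝟙 A))` with totally attributed `L` and `R`, a matching
`(m_L, a)`, a final pullback complement of `m_L` along `l` and a pushout of `r` and
`m_K` in `𝒢`, there are partial attributions `att_D`, `att_H` such that the
corresponding squares in `PAttG` form a final pullback complement and a pushout,
and `(m_R, a)` is a matching. -/
theorem sqpo_lifting
    [PreservesLimitsOfShape WalkingCospan (UG S T)]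
    [PreservesLimitsOfShape WalkingCospan (UA S T)]
    [PreservesLimitsOfShape WalkingCospan S]
    [PreservesLimitsOfShape WalkingCospan T]
    [PreservesColimitsOfShape WalkingSpan S]
    (A A₁ : 𝒜) (Lo Ko Ro Go Do Ho : 𝒢)
    (attL : S.obj Lo →. T.obj A) (attK : S.obj Ko →. T.obj A)
    (attR : S.obj Ro →. T.obj A) (attG : S.obj Go →. T.obj A₁)
    (hLtot : ∀ x : S.obj Lo, (attL x).Dom)
    (hRtot : ∀ x : S.obj Ro, (attR x).Dom)
    (lm : (⟨Ko, A, attK⟩ : PAttGObj S T) ⟶ ⟨Lo, A, attL⟩)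
    (hlma : PAttGHom.a lm = 𝟙 A)
    (rm : (⟨Ko, A, attK⟩ : PAttGObj S T) ⟶ ⟨Ro, A, attR⟩)
    (hrma : PAttGHom.a rm = 𝟙 A)
    (mLm : (⟨Lo, A, attL⟩ : PAttGObj S T) ⟶ ⟨Go, A₁, attG⟩)
    (hmatch : PAttGHom.Matching mLm)
    (mK : Ko ⟶ Do) (l₁ : Do ⟶ Go) (mR : Ro ⟶ Ho) (r₁ : Do ⟶ Ho)
    (hfpbc : IsFPBC (PAttGHom.g lm) (PAttGHom.g mLm) mK l₁)
    (hpo : IsPushout (PAttGHom.g rm) mK mR r₁) :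
    ∃ (attD : S.obj Do →. T.obj A₁) (attH : S.obj Ho →. T.obj A₁)
      (mKp : (⟨Ko, A, attK⟩ : PAttGObj S T) ⟶ ⟨Do, A₁, attD⟩)
      (l₁p : (⟨Do, A₁, attD⟩ : PAttGObj S T) ⟶ ⟨Go, A₁, attG⟩)
      (mRp : (⟨Ro, A, attR⟩ : PAttGObj S T) ⟶ ⟨Ho, A₁, attH⟩)
      (r₁p : (⟨Do, A₁, attD⟩ : PAttGObj S T) ⟶ ⟨Ho, A₁, attH⟩),
      PAttGHom.g mKp = mK ∧ PAttGHom.a mKp = PAttGHom.a mLm ∧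
      PAttGHom.g l₁p = l₁ ∧ PAttGHom.a l₁p = 𝟙 A₁ ∧
      PAttGHom.g mRp = mR ∧ PAttGHom.a mRp = PAttGHom.a mLm ∧
      PAttGHom.g r₁p = r₁ ∧ PAttGHom.a r₁p = 𝟙 A₁ ∧
      IsFPBC lm mLm mKp l₁p ∧
      IsPushout rm mKp mRp r₁p ∧
      PAttGHom.Matching mRp := by
  classical
  have hstrict' : ∀ x, attG (S.map mLm.g x) = (attL x).map (T.map mLm.a) := hmatch.1
  have hinjL : Function.Injective (S.map mLm.g) := hmatch.2
  have hsqg : IsPullback lm.g mK mLm.g l₁ := hfpbc.isPullback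
  have hSpb : IsPullback (S.map lm.g) (S.map mK) (S.map mLm.g) (S.map l₁) := hsqg.map S
  have hscomm : ∀ k, S.map l₁ (S.map mK k) = S.map mLm.g (S.map lm.g k) := by
    intro k
    rw [← FunctorToTypes.map_comp_apply, ← FunctorToTypes.map_comp_apply, hsqg.w]
  have injK : Function.Injective (S.map mK) := by
    intro k k' hkk
    have hl : S.map lm.g k = S.map lm.g k' := by
      apply hinjL
      have h1 := hscomm k
      have h2 := hscomm k'
      rw [hkk] at h1
      exact h1.symm.trans h2
    obtain ⟨p, -, hup⟩ := typePullback_existsUnique hSpb (S.map lm.g k) (S.map mK k)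
      ((hscomm k).symm)
    exact (hup k ⟨rfl, rfl⟩).trans (hup k' ⟨hl.symm, hkk.symm⟩).symm
  have attK_le_attL : ∀ (k : S.obj Ko) (t), t ∈ attK k → t ∈ attL (S.map lm.g k) := by
    intro k t ht
    have h : T.map lm.a t ∈ attL (S.map lm.g k) := lm.cond k t ht
    rw [hlma] at h
    simpa using h
  have attK_le_attR : ∀ (k : S.obj Ko) (t), t ∈ attK k → t ∈ attR (S.map rm.g k) := by
    intro k t ht
    have h : T.map rm.a t ∈ attR (S.map rm.g k) := rm.cond k t ht
    rw [hrma] at h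
    simpa using h
  -- the attribution on D
  let attD : S.obj Do →. T.obj A₁ := fun d =>
    if h : ∃ k, S.map mK k = d then (attK h.choose).map (T.map mLm.a)
    else attG (S.map l₁ d)
  have attD_mK : ∀ k, attD (S.map mK k) = (attK k).map (T.map mLm.a) := by
    intro k
    have hex : ∃ k', S.map mK k' = S.map mK k := ⟨k, rfl⟩
    have h : attD (S.map mK k) = (attK hex.choose).map (T.map mLm.a) := dif_pos hex
    rw [h, injK hex.choose_spec]
  have attD_not : ∀ d, (¬ ∃ k, S.map mK k = d) → attD d = attG (S.map l₁ d) :=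
    fun d hd => dif_neg hd
  have attD_le : ∀ d t, t ∈ attD d → t ∈ attG (S.map l₁ d) := by
    intro d t ht
    by_cases hd : ∃ k, S.map mK k = d
    · obtain ⟨k, rfl⟩ := hd
      rw [attD_mK k] at ht
      obtain ⟨t₀, ht₀, rfl⟩ := (Part.mem_map_iff _).1 ht
      rw [hscomm k, hstrict']
      exact Part.mem_map _ (attK_le_attL k t₀ ht₀)
    · rw [attD_not d hd] at ht; exact ht
  have attK_mem_of : ∀ (k : S.obj Ko) (v), v ∈ attL (S.map lm.g k) →
      T.map mLm.a v ∈ attD (S.map mK k) → v ∈ attK k := by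
    intro k v hv hvd
    rw [attD_mK k] at hvd
    obtain ⟨t₀, ht₀, -⟩ := (Part.mem_map_iff _).1 hvd
    have h := attK_le_attL k t₀ ht₀
    rwa [Part.mem_unique h hv] at ht₀
  -- morphisms for the FPBC square
  let mKp : (⟨Ko, A, attK⟩ : PAttGObj S T) ⟶ ⟨Do, A₁, attD⟩ :=
    ⟨mK, mLm.a, by
      intro x t ht
      show T.map mLm.a t ∈ attD (S.map mK x)
      rw [attD_mK x]
      exact Part.mem_map _ ht⟩
  let l₁p : (⟨Do, A₁, attD⟩ : PAttGObj S T) ⟶ ⟨Go, A₁, attG⟩ :=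
    ⟨l₁, 𝟙 A₁, by
      intro d t ht
      show T.map (𝟙 A₁) t ∈ attG (S.map l₁ d)
      rw [FunctorToTypes.map_id_apply]
      exact attD_le d t ht⟩
  have hsqP : lm ≫ mLm = mKp ≫ l₁p := by
    apply PAttGHom.ext
    · show lm.g ≫ mLm.g = mK ≫ l₁
      exact hsqg.w
    · show lm.a ≫ mLm.a = mLm.a ≫ 𝟙 A₁
      rw [hlma]; simp
  have wg_comm : ∀ s : PullbackCone mLm l₁p, s.fst.g ≫ mLm.g = s.snd.g ≫ l₁ := by
    intro s
    have h := congrArg PAttGHom.g s.condition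
    simp only [PAttGHom.comp_g] at h
    exact h
  have a_comm : ∀ s : PullbackCone mLm l₁p, s.fst.a ≫ mLm.a = s.snd.a := by
    intro s
    have h := congrArg PAttGHom.a s.condition
    simp only [PAttGHom.comp_a] at h
    rw [h]
    show s.snd.a ≫ 𝟙 A₁ = s.snd.a
    simp
  let plift : ∀ s : PullbackCone mLm l₁p, s.pt ⟶ (⟨Ko, A, attK⟩ : PAttGObj S T) := fun s =>
    ⟨hsqg.lift s.fst.g s.snd.g (wg_comm s), s.fst.a, by
      intro w t ht
      show T.map s.fst.a t ∈ attK (S.map (hsqg.lift s.fst.g s.snd.g (wg_comm s)) w)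
      have h1 : T.map s.fst.a t ∈ attL (S.map s.fst.g w) := s.fst.cond w t ht
      have h2 : T.map s.snd.a t ∈ attD (S.map s.snd.g w) := s.snd.cond w t ht
      have e1 : S.map s.fst.g w = S.map lm.g (S.map (hsqg.lift s.fst.g s.snd.g (wg_comm s)) w) := by
        rw [← FunctorToTypes.map_comp_apply, hsqg.lift_fst]
      have e2 : S.map s.snd.g w = S.map mK (S.map (hsqg.lift s.fst.g s.snd.g (wg_comm s)) w) := by
        rw [← FunctorToTypes.map_comp_apply, hsqg.lift_snd]
      rw [e1] at h1
      rw [e2] at h2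
      have e3 : T.map mLm.a (T.map s.fst.a t) = T.map s.snd.a t := by
        rw [← FunctorToTypes.map_comp_apply, a_comm s]
      refine attK_mem_of _ _ h1 ?_
      rw [e3]
      exact h2⟩
  have hlimP : IsLimit (PullbackCone.mk lm mKp hsqP) :=
    PullbackCone.IsLimit.mk hsqP plift
      (fun s => by
        apply PAttGHom.ext
        · exact hsqg.lift_fst s.fst.g s.snd.g (wg_comm s)
        · show s.fst.a ≫ lm.a = s.fst.a
          rw [hlma]; simp)
      (fun s => by
        apply PAttGHom.ext
        · exact hsqg.lift_snd s.fst.g s.snd.g (wg_comm s)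
        · show s.fst.a ≫ mLm.a = s.snd.a
          exact a_comm s)
      (fun s m hm1 hm2 => by
        apply PAttGHom.ext
        · show m.g = hsqg.lift s.fst.g s.snd.g (wg_comm s)
          apply hsqg.hom_ext
          · rw [hsqg.lift_fst]
            exact congrArg PAttGHom.g hm1
          · rw [hsqg.lift_snd]
            exact congrArg PAttGHom.g hm2
        · have h := congrArg PAttGHom.a hm1
          simp only [PAttGHom.comp_a, hlma, Category.comp_id] at h
          exact h)
  have hpbP : IsPullback lm mKp mLm l₁p := IsPullback.of_isLimit hlimP
  -- finality in PAttG
  have hFPBC : IsFPBC lm mLm mKp l₁p := by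
    refine ⟨hpbP, ?_⟩
    intro K' D' l' m' l'₁ hsq f hf
    have hsqG : IsPullback l'.g m'.g mLm.g l'₁.g := hsq.map (UG S T)
    have hsqA : IsPullback l'.a m'.a mLm.a l'₁.a := hsq.map (UA S T)
    have hTpb : IsPullback (T.map l'.a) (T.map m'.a) (T.map mLm.a) (T.map l'₁.a) := hsqA.map T
    have hSpb' : IsPullback (S.map l'.g) (S.map m'.g) (S.map mLm.g) (S.map l'₁.g) := hsqG.map S
    have hfg : f.g ≫ lm.g = l'.g := by
      have h := congrArg PAttGHom.g hf
      simp only [PAttGHom.comp_g] at h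
      exact h
    obtain ⟨f₁g, ⟨hf₁l, hf₁m⟩, hf₁uniq⟩ := hfpbc.final l'.g m'.g l'₁.g hsqG f.g hfg
    have hfa : f.a = l'.a := by
      have h := congrArg PAttGHom.a hf
      simp only [PAttGHom.comp_a, hlma, Category.comp_id] at h
      exact h
    have ha_comm : m'.a ≫ l'₁.a = f.a ≫ mLm.a := by
      have h := congrArg PAttGHom.a hsq.w
      simp only [PAttGHom.comp_a] at h
      rw [hfa]
      exact h.symm
    have attP_sub : ∀ (k₀ : S.obj K'.base) (s₀ : T.obj K'.attr),
        T.map l'.a s₀ ∈ attL (S.map l'.g k₀) → T.map m'.a s₀ ∈ D'.att (S.map m'.g k₀) →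
        s₀ ∈ K'.att k₀ := by
      intro k₀ s₀ hs1 hs2
      let prop : S.obj K'.base → T.obj K'.attr → Prop := fun k s =>
        T.map l'.a s ∈ attL (S.map l'.g k) ∧ T.map m'.a s ∈ D'.att (S.map m'.g k)
      have huniq : ∀ k s s', prop k s → prop k s' → s = s' := by
        intro k s s' hs hs'
        have h1 : T.map l'.a s = T.map l'.a s' := Part.mem_unique hs.1 hs'.1
        have h2 : T.map m'.a s = T.map m'.a s' := Part.mem_unique hs.2 hs'.2
        have hcm : T.map mLm.a (T.map l'.a s) = T.map l'₁.a (T.map m'.a s) := by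
          rw [← FunctorToTypes.map_comp_apply, ← FunctorToTypes.map_comp_apply, hsqA.w]
        obtain ⟨p, -, hup⟩ := typePullback_existsUnique hTpb _ _ hcm
        exact (hup s ⟨rfl, rfl⟩).trans (hup s' ⟨h1.symm, h2.symm⟩).symm
      let P : PAttGObj S T := ⟨K'.base, K'.attr, fun k => ⟨∃ s, prop k s, fun h => h.choose⟩⟩
      have memP : ∀ k s, s ∈ P.att k ↔ prop k s := by
        intro k s
        show s ∈ Part.mk (∃ s', prop k s') (fun h => h.choose) ↔ prop k s
        rw [Part.mem_mk_iff]
        constructor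
        · rintro ⟨h, rfl⟩
          exact h.choose_spec
        · intro hs
          exact ⟨⟨s, hs⟩, huniq k _ s (Exists.choose_spec ⟨s, hs⟩) hs⟩
      let pL : P ⟶ (⟨Lo, A, attL⟩ : PAttGObj S T) :=
        ⟨l'.g, l'.a, fun k s hs => ((memP k s).1 hs).1⟩
      let pD : P ⟶ D' := ⟨m'.g, m'.a, fun k s hs => ((memP k s).1 hs).2⟩
      have hcone : pL ≫ mLm = pD ≫ l'₁ := by
        apply PAttGHom.ext
        · show l'.g ≫ mLm.g = m'.g ≫ l'₁.g
          exact congrArg PAttGHom.g hsq.w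
        · show l'.a ≫ mLm.a = m'.a ≫ l'₁.a
          exact congrArg PAttGHom.a hsq.w
      let u : P ⟶ K' := hsq.lift pL pD hcone
      have hu1 : u ≫ l' = pL := hsq.lift_fst pL pD hcone
      have hu2 : u ≫ m' = pD := hsq.lift_snd pL pD hcone
      have hug : u.g = 𝟙 K'.base := by
        apply hsqG.hom_ext
        · show u.g ≫ l'.g = 𝟙 K'.base ≫ l'.g
          rw [Category.id_comp]
          exact congrArg PAttGHom.g hu1
        · show u.g ≫ m'.g = 𝟙 K'.base ≫ m'.g
          rw [Category.id_comp]
          exact congrArg PAttGHom.g hu2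
      have hua : u.a = 𝟙 K'.attr := by
        apply hsqA.hom_ext
        · show u.a ≫ l'.a = 𝟙 K'.attr ≫ l'.a
          rw [Category.id_comp]
          exact congrArg PAttGHom.a hu1
        · show u.a ≫ m'.a = 𝟙 K'.attr ≫ m'.a
          rw [Category.id_comp]
          exact congrArg PAttGHom.a hu2
      have h := u.cond k₀ s₀ ((memP k₀ s₀).2 ⟨hs1, hs2⟩)
      rw [hug, hua] at h
      rw [S.map_id, T.map_id] at h
      exact h
    refine ⟨⟨f₁g, l'₁.a, ?_⟩, ⟨?_, ?_⟩, ?_⟩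
    · intro d' t ht
      show T.map l'₁.a t ∈ attD (S.map f₁g d')
      have hl' : S.map l₁ (S.map f₁g d') = S.map l'₁.g d' := by
        rw [← FunctorToTypes.map_comp_apply, hf₁l]
      by_cases hd : ∃ k, S.map mK k = S.map f₁g d'
      · obtain ⟨k, hk⟩ := hd
        rw [← hk, attD_mK k]
        have h1 : S.map l'₁.g d' = S.map mLm.g (S.map lm.g k) := by
          rw [← hl', ← hk, hscomm k]
        have h2 : T.map l'₁.a t ∈ attG (S.map l'₁.g d') := l'₁.cond d' t ht
        rw [h1, hstrict'] at h2
        obtain ⟨v, hv, hvt⟩ := (Part.mem_map_iff _).1 h2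
        obtain ⟨k', ⟨hk'1, hk'2⟩, -⟩ := typePullback_existsUnique hSpb' (S.map lm.g k) d' h1.symm
        obtain ⟨s, ⟨hs1, hs2⟩, -⟩ := typePullback_existsUnique hTpb v t hvt
        have hsK' : s ∈ K'.att k' := by
          apply attP_sub k' s
          · rw [hs1, hk'1]; exact hv
          · rw [hs2, hk'2]; exact ht
        have hfk' : S.map f.g k' = k := by
          apply injK
          have e : S.map mK (S.map f.g k') = S.map f₁g (S.map m'.g k') := by
            rw [← FunctorToTypes.map_comp_apply, ← FunctorToTypes.map_comp_apply, hf₁m]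
          rw [e, hk'2, hk]
        have hvK : v ∈ attK k := by
          have hc : T.map f.a s ∈ attK (S.map f.g k') := f.cond k' s hsK'
          rw [hfk', hfa, hs1] at hc
          exact hc
        have hfin : T.map mLm.a v ∈ (attK k).map (T.map mLm.a) := Part.mem_map _ hvK
        rw [hvt] at hfin
        exact hfin
      · rw [attD_not _ hd, hl']
        exact l'₁.cond d' t ht
    · apply PAttGHom.ext
      · exact hf₁l
      · show l'₁.a ≫ 𝟙 A₁ = l'₁.a
        simp
    · apply PAttGHom.ext
      · exact hf₁m
      · show m'.a ≫ l'₁.a = f.a ≫ mLm.a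
        exact ha_comm
    · rintro y ⟨hy1, hy2⟩
      apply PAttGHom.ext
      · show y.g = f₁g
        apply hf₁uniq
        exact ⟨congrArg PAttGHom.g hy1, congrArg PAttGHom.g hy2⟩
      · have h := congrArg PAttGHom.a hy1
        simp only [PAttGHom.comp_a] at h
        show y.a = l'₁.a
        rw [← h]
        show y.a = y.a ≫ 𝟙 A₁
        simp
  -- the pushout part
  have hpoS : IsPushout (S.map rm.g) (S.map mK) (S.map mR) (S.map r₁) := hpo.map S
  obtain ⟨injR, hmix, hr1inj⟩ := typePushout_inj_facts hpoS injK
  have surjH := fun h => typePushout_jointlySurjective hpoS h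
  have hscommP : ∀ k, S.map r₁ (S.map mK k) = S.map mR (S.map rm.g k) := by
    intro k
    rw [← FunctorToTypes.map_comp_apply, ← FunctorToTypes.map_comp_apply, hpo.w]
  let attH : S.obj Ho →. T.obj A₁ := fun h =>
    if hx : ∃ x, S.map mR x = h then (attR hx.choose).map (T.map mLm.a)
    else if hd : ∃ d, S.map r₁ d = h then attG (S.map l₁ hd.choose)
    else Part.none
  have attH_mR : ∀ x, attH (S.map mR x) = (attR x).map (T.map mLm.a) := by
    intro x
    have hex : ∃ x', S.map mR x' = S.map mR x := ⟨x, rfl⟩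
    have h : attH (S.map mR x) = (attR hex.choose).map (T.map mLm.a) := dif_pos hex
    rw [h, injR hex.choose_spec]
  have attH_r₁ : ∀ d, (¬ ∃ k, S.map mK k = d) → attH (S.map r₁ d) = attG (S.map l₁ d) := by
    intro d hd
    have hnx : ¬ ∃ x, S.map mR x = S.map r₁ d := by
      rintro ⟨x, hx⟩
      obtain ⟨c, -, hc⟩ := hmix x d hx
      exact hd ⟨c, hc⟩
    have hex : ∃ d', S.map r₁ d' = S.map r₁ d := ⟨d, rfl⟩
    have h1 : attH (S.map r₁ d) = attG (S.map l₁ hex.choose) :=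
      (dif_neg hnx).trans (dif_pos hex)
    rcases hr1inj hex.choose d hex.choose_spec with h | ⟨c, c', -, hc', -⟩
    · rw [h1, h]
    · exact absurd ⟨c', hc'⟩ hd
  let mRp : (⟨Ro, A, attR⟩ : PAttGObj S T) ⟶ ⟨Ho, A₁, attH⟩ :=
    ⟨mR, mLm.a, by
      intro x t ht
      show T.map mLm.a t ∈ attH (S.map mR x)
      rw [attH_mR x]
      exact Part.mem_map _ ht⟩
  let r₁p : (⟨Do, A₁, attD⟩ : PAttGObj S T) ⟶ ⟨Ho, A₁, attH⟩ :=
    ⟨r₁, 𝟙 A₁, by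
      intro d t ht
      show T.map (𝟙 A₁) t ∈ attH (S.map r₁ d)
      rw [FunctorToTypes.map_id_apply]
      by_cases hd : ∃ k, S.map mK k = d
      · obtain ⟨k, rfl⟩ := hd
        have ht' : t ∈ (attK k).map (T.map mLm.a) := by
          rw [← attD_mK k]; exact ht
        obtain ⟨t₀, ht₀, rfl⟩ := (Part.mem_map_iff _).1 ht'
        rw [hscommP k, attH_mR]
        exact Part.mem_map _ (attK_le_attR k t₀ ht₀)
      · rw [attH_r₁ d hd]
        have h : t ∈ attG (S.map l₁ d) := by
          rw [← attD_not d hd]; exact ht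
        exact h⟩
  have hsqPo : rm ≫ mRp = mKp ≫ r₁p := by
    apply PAttGHom.ext
    · show rm.g ≫ mR = mK ≫ r₁
      exact hpo.w
    · show rm.a ≫ mLm.a = mLm.a ≫ 𝟙 A₁
      rw [hrma]; simp
  have pog_comm : ∀ s : PushoutCocone rm mKp, rm.g ≫ s.inl.g = mK ≫ s.inr.g := by
    intro s
    have h := congrArg PAttGHom.g s.condition
    simp only [PAttGHom.comp_g] at h
    exact h
  have poa_comm : ∀ s : PushoutCocone rm mKp, s.inl.a = mLm.a ≫ s.inr.a := by
    intro s
    have h := congrArg PAttGHom.a s.condition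
    simp only [PAttGHom.comp_a, hrma, Category.id_comp] at h
    exact h
  let podesc : ∀ s : PushoutCocone rm mKp, (⟨Ho, A₁, attH⟩ : PAttGObj S T) ⟶ s.pt := fun s =>
    ⟨hpo.desc s.inl.g s.inr.g (pog_comm s), s.inr.a, by
      intro h t ht
      have ht' : t ∈ attH h := ht
      rcases surjH h with ⟨x, rfl⟩ | ⟨d, rfl⟩
      · rw [attH_mR] at ht'
        obtain ⟨t₀, ht₀, rfl⟩ := (Part.mem_map_iff _).1 ht'
        have hc : T.map s.inl.a t₀ ∈ s.pt.att (S.map s.inl.g x) := s.inl.cond x t₀ ht₀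
        have e1 : S.map (hpo.desc s.inl.g s.inr.g (pog_comm s)) (S.map mR x)
            = S.map s.inl.g x := by
          rw [← FunctorToTypes.map_comp_apply, hpo.inl_desc]
        have e2 : T.map s.inr.a (T.map mLm.a t₀) = T.map s.inl.a t₀ := by
          rw [← FunctorToTypes.map_comp_apply, ← poa_comm s]
        show T.map s.inr.a (T.map mLm.a t₀) ∈
          s.pt.att (S.map (hpo.desc s.inl.g s.inr.g (pog_comm s)) (S.map mR x))
        rw [e1, e2]
        exact hc
      · by_cases hd : ∃ k, S.map mK k = d
        · obtain ⟨k, rfl⟩ := hd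
          rw [hscommP k, attH_mR] at ht'
          obtain ⟨t₀, ht₀, rfl⟩ := (Part.mem_map_iff _).1 ht'
          have hc : T.map s.inl.a t₀ ∈ s.pt.att (S.map s.inl.g (S.map rm.g k)) :=
            s.inl.cond _ t₀ ht₀
          have e1 : S.map (hpo.desc s.inl.g s.inr.g (pog_comm s)) (S.map r₁ (S.map mK k))
              = S.map s.inl.g (S.map rm.g k) := by
            rw [hscommP k, ← FunctorToTypes.map_comp_apply, hpo.inl_desc]
          have e2 : T.map s.inr.a (T.map mLm.a t₀) = T.map s.inl.a t₀ := by
            rw [← FunctorToTypes.map_comp_apply, ← poa_comm s]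
          show T.map s.inr.a (T.map mLm.a t₀) ∈
            s.pt.att (S.map (hpo.desc s.inl.g s.inr.g (pog_comm s)) (S.map r₁ (S.map mK k)))
          rw [e1, e2]
          exact hc
        · rw [attH_r₁ d hd] at ht'
          have hD : t ∈ attD d := by
            rw [attD_not d hd]; exact ht'
          have hc : T.map s.inr.a t ∈ s.pt.att (S.map s.inr.g d) := s.inr.cond d t hD
          have e1 : S.map (hpo.desc s.inl.g s.inr.g (pog_comm s)) (S.map r₁ d)
              = S.map s.inr.g d := by
            rw [← FunctorToTypes.map_comp_apply, hpo.inr_desc]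
          show T.map s.inr.a t ∈
            s.pt.att (S.map (hpo.desc s.inl.g s.inr.g (pog_comm s)) (S.map r₁ d))
          rw [e1]
          exact hc⟩
  have hcolimP : IsColimit (PushoutCocone.mk mRp r₁p hsqPo) :=
    PushoutCocone.IsColimit.mk hsqPo podesc
      (fun s => by
        apply PAttGHom.ext
        · show mR ≫ hpo.desc s.inl.g s.inr.g (pog_comm s) = s.inl.g
          exact hpo.inl_desc _ _ _
        · show mLm.a ≫ s.inr.a = s.inl.a
          exact (poa_comm s).symm)
      (fun s => by
        apply PAttGHom.ext
        · show r₁ ≫ hpo.desc s.inl.g s.inr.g (pog_comm s) = s.inr.g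
          exact hpo.inr_desc _ _ _
        · show 𝟙 A₁ ≫ s.inr.a = s.inr.a
          simp)
      (fun s m hm1 hm2 => by
        apply PAttGHom.ext
        · show m.g = hpo.desc s.inl.g s.inr.g (pog_comm s)
          apply hpo.hom_ext
          · rw [hpo.inl_desc]
            exact congrArg PAttGHom.g hm1
          · rw [hpo.inr_desc]
            exact congrArg PAttGHom.g hm2
        · have h := congrArg PAttGHom.a hm2
          simp only [PAttGHom.comp_a] at h
          show m.a = s.inr.a
          rw [← h]
          show m.a = 𝟙 A₁ ≫ m.a
          simp)
  have hPO : IsPushout rm mKp mRp r₁p := IsPushout.of_isColimit hcolimP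
  have hmatchR : PAttGHom.Matching mRp := by
    constructor
    · intro x
      show attH (S.map mR x) = (attR x).map (T.map mLm.a)
      exact attH_mR x
    · exact injR
  exact ⟨attD, attH, mKp, l₁p, mRp, r₁p, rfl, rfl, rfl, rfl, rfl, rfl, rfl, rfl,
    hFPBC, hPO, hmatchR⟩

end AttStruct
end

section
/- Suppose the functor S : 𝐆 ⥤ Type preserves pushouts. Let (r, id_A) : (K, A, att_K) → (R, A, att_R) be a PAttG-morphism and let (m_K, a) : (K, A, att_K) → (D, A₁, att_D) be a matching; write C for the complement of the range of S(m_K) in S(D). Let m_R : R → H and r₁ : D → H form a pushout in 𝐆 of r : K → R and m_K : K → D. Then S(m_R) is injective, S(r₁) ∘ S(m_K) = S(m_R) ∘ S(r), and S(r₁) restricts to a bijection from C onto the complement of the range of S(m_R) in S(H). Define att_H : S(H) ⇀ T(A₁) by att_H(S(m_R)(y)) = T(a)(att_R(y)) for y ∈ dom(att_R) and att_H(S(r₁)(x)) = att_D(x) for x ∈ C with x ∈ dom(att_D), and undefined elsewhere. Then (m_R, a) : (R, A, att_R) → (H, A₁, att_H) is a matching, (r₁, id_{A₁}) : (D, A₁,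 att_D) → (H, A₁, att_H) is a PAttG-morphism, and the square given by (m_R, a) and (r₁, id_{A₁}) is a pushout of (r, id_A) and (m_K, a) in PAttG. -/
open CategoryTheory CategoryTheory.Limits

universe w v u v' u'

namespace AttStruct

variable {𝒢 : Type u} [Category.{v} 𝒢] {𝒜 : Type u'} [Category.{v'} 𝒜]

variable {S : 𝒢 ⥤ Type w} {T : 𝒜 ⥤ Type w}

open Limits.Types in
private lemma pushout_type_facts' {Z X₁ X₂ W : Type w} {f : Z ⟶ X₁} {g : Z ⟶ X₂}
    {l : X₁ ⟶ W} {r : X₂ ⟶ W} (hw : f ≫ l = g ≫ r)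
    (hc : IsColimit (PushoutCocone.mk l r hw)) (hf : Function.Injective f) :
    Function.Injective r ∧
    (∀ x x', l x = l x' → (x = x' ∨ ∃ s s', g s = g s' ∧ x = f s ∧ x' = f s')) ∧
    (∀ x y, l x = r y ↔ ∃ s, f s = x ∧ g s = y) ∧
    (∀ z : W, (∃ x, l x = z) ∨ (∃ y, r y = z)) := by
  have : Mono f := (mono_iff_injective f).2 hf
  set e := IsColimit.coconePointUniqueUpToIso (Pushout.isColimitCocone f g) hc with he
  have hl : ∀ x, e.hom (Pushout.inl f g x) = l x := fun x => by
    have := IsColimit.comp_coconePointUniqueUpToIso_hom (Pushout.isColimitCocone f g) hc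
      WalkingSpan.left
    exact congrArg (fun φ => φ x) this
  have hr : ∀ y, e.hom (Pushout.inr f g y) = r y := fun y => by
    have := IsColimit.comp_coconePointUniqueUpToIso_hom (Pushout.isColimitCocone f g) hc
      WalkingSpan.right
    exact congrArg (fun φ => φ y) this
  have ebij : Function.Bijective e.hom := (isIso_iff_bijective e.hom).1 inferInstance
  refine ⟨?_, ?_, ?_, ?_⟩
  · intro y y' h
    have : Pushout.inr f g y = Pushout.inr f g y' := ebij.1 (by rw [hr, hr, h])
    have := (Pushout.quot_mk_eq_iff f g (Sum.inr y) (Sum.inr y')).1 this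
    rwa [Pushout.inr_rel'_inr_iff] at this
  · intro x x' h
    have : Pushout.inl f g x = Pushout.inl f g x' := ebij.1 (by rw [hl, hl, h])
    have := (Pushout.quot_mk_eq_iff f g (Sum.inl x) (Sum.inl x')).1 this
    rw [Pushout.inl_rel'_inl_iff] at this
    exact this.imp id (fun ⟨s, s', h1, h2, h3⟩ => ⟨s, s', h1, h2, h3⟩)
  · intro x y
    constructor
    · intro h
      have : Pushout.inl f g x = Pushout.inr f g y := ebij.1 (by rw [hl, hr, h])
      exact (Pushout.inl_eq_inr_iff f g x y).1 this
    · rintro ⟨s, rfl, rfl⟩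
      rw [← hl, ← hr]
      exact congrArg e.hom (Quot.sound (Pushout.Rel.inl_inr s))
  · intro z
    obtain ⟨p, hp⟩ := ebij.2 z
    obtain ⟨x | y⟩ := p
    · exact Or.inl ⟨x, (hl x).symm.trans hp⟩
    · exact Or.inr ⟨y, (hr y).symm.trans hp⟩

/-- Lifting pushouts to partially attributed structures: given a rule morphism
`(r, 𝟙 A)`, a matching `(m_K, a)` and a pushout of `r` and `m_K` in `𝒢`,
`S(m_R)` is injective, the square commutes after applying `S`, `S(r₁)` restricts
to a bijection between the complements of the images, and for the partial
attribution `att_H` defined by `att_H(S(m_R)(y)) = T(a)(att_R(y))` and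
`att_H(S(r₁)(x)) = att_D(x)` for `x` outside the range of `S(m_K)` (undefined
elsewhere), `(m_R, a)` is a matching, `(r₁, 𝟙 A₁)` is a `PAttG`-morphism, and the
resulting square is a pushout in `PAttG`. -/
theorem pushout_lifting
    [PreservesColimitsOfShape WalkingSpan S]
    (A A₁ : 𝒜) (Ko Ro Do Ho : 𝒢)
    (attK : S.obj Ko →. T.obj A) (attR : S.obj Ro →. T.obj A)
    (attD : S.obj Do →. T.obj A₁)
    (rm : (⟨Ko, A, attK⟩ : PAttGObj S T) ⟶ ⟨Ro, A, attR⟩)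
    (hrma : PAttGHom.a rm = 𝟙 A)
    (mKm : (⟨Ko, A, attK⟩ : PAttGObj S T) ⟶ ⟨Do, A₁, attD⟩)
    (hmatch : PAttGHom.Matching mKm)
    (mR : Ro ⟶ Ho) (r₁ : Do ⟶ Ho)
    (hpo : IsPushout (PAttGHom.g rm) (PAttGHom.g mKm) mR r₁) :
    Function.Injective (S.map mR) ∧
    S.map r₁ ∘ S.map (PAttGHom.g mKm) = S.map mR ∘ S.map (PAttGHom.g rm) ∧
    Set.BijOn (S.map r₁)
      {x | x ∉ Set.range (S.map (PAttGHom.g mKm))}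
      {z | z ∉ Set.range (S.map mR)} ∧
    ∀ attH : S.obj Ho →. T.obj A₁,
      (∀ y : S.obj Ro, attH (S.map mR y) = (attR y).map (T.map (PAttGHom.a mKm))) →
      (∀ x : S.obj Do, x ∉ Set.range (S.map (PAttGHom.g mKm)) →
        attH (S.map r₁ x) = attD x) →
      ∃ (mRp : (⟨Ro, A, attR⟩ : PAttGObj S T) ⟶ ⟨Ho, A₁, attH⟩)
        (r₁p : (⟨Do, A₁, attD⟩ : PAttGObj S T) ⟶ ⟨Ho, A₁, attH⟩),
        PAttGHom.g mRp = mR ∧ PAttGHom.a mRp = PAttGHom.a mKm ∧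
        PAttGHom.g r₁p = r₁ ∧ PAttGHom.a r₁p = 𝟙 A₁ ∧
        PAttGHom.Matching mRp ∧
        IsPushout rm mKm mRp r₁p := by
  obtain ⟨rg, ra, rcond⟩ := rm
  obtain ⟨mKg, mKa, mKcond⟩ := mKm
  replace hrma : ra = 𝟙 A := hrma
  subst hrma
  have hinj : Function.Injective (S.map mKg) := hmatch.2
  have hstrict : ∀ x, attD (S.map mKg x) = (attK x).map (T.map mKa) := hmatch.1
  replace hpo : IsPushout rg mKg mR r₁ := hpo
  dsimp only at *
  have hSpo := hpo.map S
  have hflip := hSpo.flip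
  obtain ⟨injR, hll, hlr, hsurj⟩ := pushout_type_facts' hflip.w hflip.isColimit hinj
  have hcomm : ∀ k, S.map r₁ (S.map mKg k) = S.map mR (S.map rg k) := by
    intro k
    rw [← FunctorToTypes.map_comp_apply, ← FunctorToTypes.map_comp_apply, hpo.w]
  refine ⟨injR, funext hcomm, ⟨?_, ?_, ?_⟩, ?_⟩
  · intro x hx hmem
    obtain ⟨y, hy⟩ := hmem
    obtain ⟨s, hs, -⟩ := (hlr x y).1 hy.symm
    exact hx ⟨s, hs⟩
  · intro x hx x' hx' h
    rcases hll x x' h with h' | ⟨s, s', -, h1, -⟩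
    · exact h'
    · exact absurd ⟨s, h1.symm⟩ hx
  · intro z hz
    rcases hsurj z with ⟨x, hx⟩ | ⟨y, hy⟩
    · refine ⟨x, ?_, hx⟩
      rintro ⟨k, rfl⟩
      exact hz ⟨S.map rg k, (hcomm k).symm.trans hx⟩
    · exact absurd ⟨y, hy⟩ hz
  · intro attH hH1 hH2
    have cond1 : ∀ (x : S.obj Ro) (t : T.obj A), t ∈ attR x →
        T.map mKa t ∈ attH (S.map mR x) := by
      intro x t ht
      rw [hH1]
      exact Part.mem_map _ ht
    have cond2 : ∀ (x : S.obj Do) (t : T.obj A₁), t ∈ attD x →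
        T.map (𝟙 A₁) t ∈ attH (S.map r₁ x) := by
      intro x t ht
      simp only [FunctorToTypes.map_id_apply]
      by_cases hx : x ∈ Set.range (S.map mKg)
      · obtain ⟨k, rfl⟩ := hx
        rw [hcomm k, hH1]
        rw [hstrict k] at ht
        obtain ⟨p, hp, rfl⟩ := Part.mem_map_iff _ |>.1 ht
        have h0 := rcond k p hp
        simp only [FunctorToTypes.map_id_apply] at h0
        exact Part.mem_map _ h0
      · rw [hH2 x hx]
        exact ht
    let Kp : PAttGObj S T := ⟨Ko, A, attK⟩
    let Rp : PAttGObj S T := ⟨Ro, A, attR⟩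
    let Dp : PAttGObj S T := ⟨Do, A₁, attD⟩
    let Hp : PAttGObj S T := ⟨Ho, A₁, attH⟩
    let rmh : Kp ⟶ Rp := ⟨rg, 𝟙 A, rcond⟩
    let mKh : Kp ⟶ Dp := ⟨mKg, mKa, mKcond⟩
    let mRh : Rp ⟶ Hp := ⟨mR, mKa, cond1⟩
    let r₁h : Dp ⟶ Hp := ⟨r₁, 𝟙 A₁, cond2⟩
    refine ⟨mRh, r₁h, rfl, rfl, rfl, rfl, ⟨fun y => hH1 y, injR⟩, ?_⟩
    have wsq : CommSq rmh mKh mRh r₁h := by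
      constructor
      apply PAttGHom.ext
      · exact hpo.w
      · show 𝟙 A ≫ mKa = mKa ≫ 𝟙 A₁
        simp
    refine IsPushout.of_isColimit' wsq ?_
    apply PushoutCocone.IsColimit.mk wsq.w
    case desc =>
      intro s
      have wg : rg ≫ PAttGHom.g s.inl = mKg ≫ PAttGHom.g s.inr := by
        have := congrArg PAttGHom.g s.condition
        simpa using this
      have ha : mKa ≫ PAttGHom.a s.inr = PAttGHom.a s.inl := by
        have := congrArg PAttGHom.a s.condition
        simp only [PAttGHom.comp_a] at this
        show mKa ≫ PAttGHom.a s.inr = PAttGHom.a s.inl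
        have h0 : 𝟙 A ≫ PAttGHom.a s.inl = mKa ≫ PAttGHom.a s.inr := this
        simpa using h0.symm
      refine ⟨hpo.desc (PAttGHom.g s.inl) (PAttGHom.g s.inr) wg,
        PAttGHom.a (X := Dp) (Y := s.pt) s.inr, ?_⟩
      intro z t ht
      replace ht : t ∈ attH z := ht
      have hmain : ∀ (y : S.obj Ro) (p : T.obj A), p ∈ attR y →
          T.map (PAttGHom.a s.inr) (T.map mKa p) ∈
            s.pt.att (S.map (hpo.desc (PAttGHom.g s.inl) (PAttGHom.g s.inr) wg)
              (S.map mR y)) := by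
        intro y p hp
        have h1 := PAttGHom.cond s.inl y p hp
        have heq : S.map (hpo.desc (PAttGHom.g s.inl) (PAttGHom.g s.inr) wg)
            (S.map mR y) = S.map (PAttGHom.g s.inl) y := by
          rw [← FunctorToTypes.map_comp_apply, hpo.inl_desc]
        rw [heq]
        have ht2 : T.map (mKa ≫ PAttGHom.a s.inr) p ∈
            s.pt.att (S.map (PAttGHom.g s.inl) y) := by
          rw [ha]; exact h1
        simpa [FunctorToTypes.map_comp_apply] using ht2
      rcases hsurj z with ⟨x, rfl⟩ | ⟨y, rfl⟩
      · by_cases hx : x ∈ Set.range (S.map mKg)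
        · obtain ⟨k, rfl⟩ := hx
          rw [hcomm k, hH1] at ht
          obtain ⟨p, hp, rfl⟩ := Part.mem_map_iff _ |>.1 ht
          rw [hcomm k]
          exact hmain (S.map rg k) p hp
        · rw [hH2 x hx] at ht
          have h1 := PAttGHom.cond s.inr x t ht
          have heq : S.map (hpo.desc (PAttGHom.g s.inl) (PAttGHom.g s.inr) wg)
              (S.map r₁ x) = S.map (PAttGHom.g s.inr) x := by
            rw [← FunctorToTypes.map_comp_apply, hpo.inr_desc]
          rw [heq]
          exact h1
      · rw [hH1] at ht
        obtain ⟨p, hp, rfl⟩ := Part.mem_map_iff _ |>.1 ht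
        exact hmain y p hp
    case fac_left =>
      intro s
      apply PAttGHom.ext
      · exact hpo.inl_desc _ _ _
      · show mKa ≫ PAttGHom.a s.inr = PAttGHom.a s.inl
        have := congrArg PAttGHom.a s.condition
        simp only [PAttGHom.comp_a] at this
        have h0 : 𝟙 A ≫ PAttGHom.a s.inl = mKa ≫ PAttGHom.a s.inr := this
        simpa using h0.symm
    case fac_right =>
      intro s
      apply PAttGHom.ext
      · exact hpo.inr_desc _ _ _
      · show 𝟙 A₁ ≫ PAttGHom.a s.inr = PAttGHom.a s.inr
        simp
    case uniq =>
      intro s m h1 h2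
      apply PAttGHom.ext
      · apply hpo.hom_ext
        · rw [hpo.inl_desc]
          have := congrArg PAttGHom.g h1
          simpa using this
        · rw [hpo.inr_desc]
          have := congrArg PAttGHom.g h2
          simpa using this
      · have := congrArg PAttGHom.a h2
        simp only [PAttGHom.comp_a] at this
        show PAttGHom.a m = PAttGHom.a s.inr
        have h0 : 𝟙 A₁ ≫ PAttGHom.a m = PAttGHom.a s.inr := this
        simpa using h0

end AttStruct
end

section
/- Suppose the projection functors U_𝐆 : PAttG ⥤ 𝐆 and U_𝐀 : PAttG ⥤ 𝐀 and the functors S : 𝐆 ⥤ Type and T : 𝐀 ⥤ Type all preserve pullbacks. Consider a pullback square in PAttG consisting of (l, b) : (K, A', att_K) → (L, A, att_L), (m_K, a') : (K, A', att_K) → (D, A'₁, att_D), (m_L, a) : (L, A, att_L) → (G, A₁, att_G) and (l₁, b₁) : (D, A'₁, att_D) → (G, A₁, att_G), with (m_L, a) ∘ (l, b) = (l₁, b₁) ∘ (m_K, a'). If (m_L, a) is a matching, then (m_K, a') is a matching and the preimage of the range of S(m_L) under S(l₁) is contained in the range of S(m_K). -/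
open CategoryTheory CategoryTheory.Limits

universe w v u v' u'

namespace AttStruct

variable {𝒢 : Type u} [Category.{v} 𝒢] {𝒜 : Type u'} [Category.{v'} 𝒜]

variable {S : 𝒢 ⥤ Type w} {T : 𝒜 ⥤ Type w}

/-- In a pullback square in `PAttG`, if the morphism `mLm` is a matching then so is
`mk`, and the preimage under `S(l₁)` of the range of `S(m_L)` is contained in the
range of `S(m_K)`. -/
theorem matching_of_isPullback
    [PreservesLimitsOfShape WalkingCospan (UG S T)]
    [PreservesLimitsOfShape WalkingCospan (UA S T)]
    [PreservesLimitsOfShape WalkingCospan S]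
    [PreservesLimitsOfShape WalkingCospan T]
    (Kp Lp Dp Gp : PAttGObj S T)
    (lb : Kp ⟶ Lp) (mk : Kp ⟶ Dp) (mLm : Lp ⟶ Gp) (l1b : Dp ⟶ Gp)
    (hpb : IsPullback lb mk mLm l1b)
    (hm : PAttGHom.Matching mLm) :
    PAttGHom.Matching mk ∧
      S.map (PAttGHom.g l1b) ⁻¹' Set.range (S.map (PAttGHom.g mLm)) ⊆
        Set.range (S.map (PAttGHom.g mk)) := by
  classical
  -- base square is a pullback in 𝒢, hence in Type after applying S
  have hGb : IsPullback lb.g mk.g mLm.g l1b.g := hpb.map (UG S T)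
  have hAb : IsPullback lb.a mk.a mLm.a l1b.a := hpb.map (UA S T)
  have hG : IsPullback (S.map lb.g) (S.map mk.g) (S.map mLm.g) (S.map l1b.g) := hGb.map S
  have hA : IsPullback (T.map lb.a) (T.map mk.a) (T.map mLm.a) (T.map l1b.a) := hAb.map T
  have hcommS : ∀ x, S.map mLm.g (S.map lb.g x) = S.map l1b.g (S.map mk.g x) := by
    intro x
    have := ConcreteCategory.congr_hom hG.w x
    simpa using this
  -- injectivity of S.map mk.g
  have hinj : Function.Injective (S.map mk.g) := by
    intro k k' h
    have hfst : S.map lb.g k = S.map lb.g k' := by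
      apply hm.2
      rw [hcommS, hcommS, h]
    exact PullbackCone.IsLimit.type_ext hG.isLimit (by exact hfst) (by exact h)
  -- the range condition
  have hrange : S.map (PAttGHom.g l1b) ⁻¹' Set.range (S.map (PAttGHom.g mLm)) ⊆
      Set.range (S.map (PAttGHom.g mk)) := by
    rintro d ⟨x, hx⟩
    let p : Types.PullbackObj (S.map mLm.g) (S.map l1b.g) := ⟨⟨x, d⟩, hx⟩
    refine ⟨(PullbackCone.IsLimit.equivPullbackObj hG.isLimit).symm p, ?_⟩
    exact PullbackCone.IsLimit.equivPullbackObj_symm_apply_snd hG.isLimit p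
  refine ⟨⟨?_, hinj⟩, hrange⟩
  -- strictness of mk
  intro x
  apply Part.ext
  intro tD
  constructor
  · intro htD
    -- tD ∈ Dp.att (S mk.g x)
    have h1 : T.map l1b.a tD ∈ Gp.att (S.map l1b.g (S.map mk.g x)) := l1b.cond _ _ htD
    rw [← hcommS x] at h1
    rw [hm.1 (S.map lb.g x)] at h1
    obtain ⟨tL, htL, htLeq⟩ := (Part.mem_map_iff _).1 h1
    -- build the element of the attribute pullback
    obtain ⟨tK, htK1, htK2⟩ : ∃ tK, T.map lb.a tK = tL ∧ T.map mk.a tK = tD := by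
      refine ⟨(PullbackCone.IsLimit.equivPullbackObj hA.isLimit).symm ⟨⟨tL, tD⟩, htLeq⟩,
        ?_, ?_⟩
      · exact PullbackCone.IsLimit.equivPullbackObj_symm_apply_fst hA.isLimit _
      · exact PullbackCone.IsLimit.equivPullbackObj_symm_apply_snd hA.isLimit _
    -- auxiliary object with tK added at x
    have hcondL : ∀ (y : S.obj Kp.base) (t : T.obj Kp.attr),
        t ∈ (if y = x then Part.some tK else Kp.att y) →
          T.map lb.a t ∈ Lp.att (S.map lb.g y) := by
      intro y t ht
      by_cases hy : y = x
      · subst hy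
        rw [if_pos rfl, Part.mem_some_iff] at ht
        subst ht
        rw [htK1]; exact htL
      · rw [if_neg hy] at ht
        exact lb.cond y t ht
    have hcondD : ∀ (y : S.obj Kp.base) (t : T.obj Kp.attr),
        t ∈ (if y = x then Part.some tK else Kp.att y) →
          T.map mk.a t ∈ Dp.att (S.map mk.g y) := by
      intro y t ht
      by_cases hy : y = x
      · subst hy
        rw [if_pos rfl, Part.mem_some_iff] at ht
        subst ht
        rw [htK2]; exact htD
      · rw [if_neg hy] at ht
        exact mk.cond y t ht
    let K' : PAttGObj S T :=
      ⟨Kp.base, Kp.attr, fun y => if y = x then Part.some tK else Kp.att y⟩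
    let lb' : K' ⟶ Lp := ⟨lb.g, lb.a, hcondL⟩
    let mk' : K' ⟶ Dp := ⟨mk.g, mk.a, hcondD⟩
    have hw : lb' ≫ mLm = mk' ≫ l1b := by
      apply PAttGHom.ext
      · show lb.g ≫ mLm.g = mk.g ≫ l1b.g
        exact congrArg PAttGHom.g hpb.w
      · show lb.a ≫ mLm.a = mk.a ≫ l1b.a
        exact congrArg PAttGHom.a hpb.w
    let u : K' ⟶ Kp := hpb.lift lb' mk' hw
    have hu1 : u ≫ lb = lb' := hpb.lift_fst lb' mk' hw
    have hu2 : u ≫ mk = mk' := hpb.lift_snd lb' mk' hw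
    have hug : u.g = 𝟙 Kp.base := by
      apply hGb.hom_ext
      · show u.g ≫ lb.g = 𝟙 Kp.base ≫ lb.g
        rw [Category.id_comp]
        exact congrArg PAttGHom.g hu1
      · show u.g ≫ mk.g = 𝟙 Kp.base ≫ mk.g
        rw [Category.id_comp]
        exact congrArg PAttGHom.g hu2
    have hua : u.a = 𝟙 Kp.attr := by
      apply hAb.hom_ext
      · show u.a ≫ lb.a = 𝟙 Kp.attr ≫ lb.a
        rw [Category.id_comp]
        exact congrArg PAttGHom.a hu1
      · show u.a ≫ mk.a = 𝟙 Kp.attr ≫ mk.a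
        rw [Category.id_comp]
        exact congrArg PAttGHom.a hu2
    have hmem : tK ∈ K'.att x := by
      show tK ∈ (if x = x then Part.some tK else Kp.att x)
      rw [if_pos rfl]
      exact Part.mem_some tK
    have := u.cond x tK hmem
    rw [hug, hua] at this
    rw [S.map_id, T.map_id] at this
    exact (Part.mem_map_iff _).2 ⟨tK, this, htK2⟩
  · intro h
    obtain ⟨s, hs, hst⟩ := (Part.mem_map_iff _).1 h
    rw [← hst]
    exact mk.cond x s hs

end AttStruct
end

section
/- Suppose the projection functors U_𝐆 : PAttG ⥤ 𝐆 and U_𝐀 : PAttG ⥤ 𝐀 and the functors S : 𝐆 ⥤ Type and T : 𝐀 ⥤ Type all preserve pullbacks. Let (l, id_A) : (K, A, att_K) → (L, A, att_L) be a PAttG-morphism and (m_L, a) : (L, A, att_L) → (G, A₁, att_G) a matching; write C for the complement of the range of S(m_L) in S(G). Let m_K : K → D and l₁ : D → G form a final pullback complement of m_L along l in 𝐆. Then S(m_K) is injective and S(l₁) maps the complement C₁ of the range of S(m_K) in S(D) into C. Define att_D : S(D) ⇀ T(A₁) by att_D(S(m_K)(y)) = T(a)(att_K(y)) for y ∈ dom(att_K),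 att_D(x) = att_G(S(l₁)(x)) for x ∈ C₁ with S(l₁)(x) ∈ dom(att_G), and undefined elsewhere. Then (m_K, a) : (K, A, att_K) → (D, A₁, att_D) is a matching, (l₁, id_{A₁}) : (D, A₁, att_D) → (G, A₁, att_G) is a PAttG-morphism, and the square given by (m_K, a) and (l₁, id_{A₁}) is a final pullback complement of (m_L, a) along (l, id_A) in PAttG. -/
open CategoryTheory CategoryTheory.Limits

universe w v u v' u'

namespace AttStruct

variable {𝒢 : Type u} [Category.{v} 𝒢] {𝒜 : Type u'} [Category.{v'} 𝒜]

variable {S : 𝒢 ⥤ Type w} {T : 𝒜 ⥤ Type w}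

private lemma typePB_injective {P X Y Z : Type w} {fst : P ⟶ X} {snd : P ⟶ Y} {f : X ⟶ Z}
    {g : Y ⟶ Z} (h : IsPullback fst snd f g) {p p' : P}
    (h1 : fst p = fst p') (h2 : snd p = snd p') : p = p' := by
  have := h.hom_ext (k := TypeCat.ofHom fun _ : PUnit.{w+1} => p) (l := TypeCat.ofHom fun _ => p')
    (ConcreteCategory.hom_ext _ _ fun _ => h1) (ConcreteCategory.hom_ext _ _ fun _ => h2)
  exact types_congr_hom this PUnit.unit

private lemma typePB_exists {P X Y Z : Type w} {fst : P ⟶ X} {snd : P ⟶ Y} {f : X ⟶ Z}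
    {g : Y ⟶ Z} (h : IsPullback fst snd f g) {x : X} {y : Y} (hxy : f x = g y) :
    ∃ p, fst p = x ∧ snd p = y := by
  refine ⟨h.lift (TypeCat.ofHom fun _ : PUnit.{w+1} => x) (TypeCat.ofHom fun _ => y) (ConcreteCategory.hom_ext _ _ fun _ => hxy) PUnit.unit, ?_, ?_⟩
  · exact types_congr_hom (h.lift_fst (TypeCat.ofHom fun _ : PUnit.{w+1} => x) (TypeCat.ofHom fun _ => y)
      (ConcreteCategory.hom_ext _ _ fun _ => hxy)) PUnit.unit
  · exact types_congr_hom (h.lift_snd (TypeCat.ofHom fun _ : PUnit.{w+1} => x) (TypeCat.ofHom fun _ => y)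
      (ConcreteCategory.hom_ext _ _ fun _ => hxy)) PUnit.unit

private def homMk {X Y : PAttGObj S T} (g : X.base ⟶ Y.base) (a : X.attr ⟶ Y.attr)
    (cond : ∀ (x : S.obj X.base) (t : T.obj X.attr), t ∈ X.att x →
      T.map a t ∈ Y.att (S.map g x)) : X ⟶ Y :=
  ⟨g, a, cond⟩

@[simp] private lemma homMk_g {X Y : PAttGObj S T} (g a cond) :
    PAttGHom.g (@homMk _ _ _ _ S T X Y g a cond) = g := rfl

@[simp] private lemma homMk_a {X Y : PAttGObj S T} (g a cond) :
    PAttGHom.a (@homMk _ _ _ _ S T X Y g a cond) = a := rfl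

/-- Lifting final pullback complements to partially attributed structures: given a
rule morphism `(l, 𝟙 A)`, a matching `(m_L, a)` and a final pullback complement of
`m_L` along `l` in `𝒢`, `S(m_K)` is injective, `S(l₁)` maps the complement of the
range of `S(m_K)` into the complement of the range of `S(m_L)`, and for the
partial attribution `att_D` defined by `att_D(S(m_K)(y)) = T(a)(att_K(y))` and
`att_D(x) = att_G(S(l₁)(x))` for `x` outside the range of `S(m_K)` (undefined
elsewhere), `(m_K, a)` is a matching, `(l₁, 𝟙 A₁)` is a `PAttG`-morphism, and the
resulting square is a final pullback complement in `PAttG`. -/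
theorem fpbc_lifting
    [PreservesLimitsOfShape WalkingCospan (UG S T)]
    [PreservesLimitsOfShape WalkingCospan (UA S T)]
    [PreservesLimitsOfShape WalkingCospan S]
    [PreservesLimitsOfShape WalkingCospan T]
    (A A₁ : 𝒜) (Lo Ko Go Do : 𝒢)
    (attL : S.obj Lo →. T.obj A) (attK : S.obj Ko →. T.obj A)
    (attG : S.obj Go →. T.obj A₁)
    (lm : (⟨Ko, A, attK⟩ : PAttGObj S T) ⟶ ⟨Lo, A, attL⟩)
    (hlma : PAttGHom.a lm = 𝟙 A)
    (mLm : (⟨Lo, A, attL⟩ : PAttGObj S T) ⟶ ⟨Go, A₁, attG⟩)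
    (hmatch : PAttGHom.Matching mLm)
    (mK : Ko ⟶ Do) (l₁ : Do ⟶ Go)
    (hfpbc : IsFPBC (PAttGHom.g lm) (PAttGHom.g mLm) mK l₁) :
    Function.Injective (S.map mK) ∧
    (∀ x : S.obj Do, x ∉ Set.range (S.map mK) →
      S.map l₁ x ∉ Set.range (S.map (PAttGHom.g mLm))) ∧
    ∀ attD : S.obj Do →. T.obj A₁,
      (∀ y : S.obj Ko, attD (S.map mK y) = (attK y).map (T.map (PAttGHom.a mLm))) →
      (∀ x : S.obj Do, x ∉ Set.range (S.map mK) → attD x = attG (S.map l₁ x)) →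
      ∃ (mKp : (⟨Ko, A, attK⟩ : PAttGObj S T) ⟶ ⟨Do, A₁, attD⟩)
        (l₁p : (⟨Do, A₁, attD⟩ : PAttGObj S T) ⟶ ⟨Go, A₁, attG⟩),
        PAttGHom.g mKp = mK ∧ PAttGHom.a mKp = PAttGHom.a mLm ∧
        PAttGHom.g l₁p = l₁ ∧ PAttGHom.a l₁p = 𝟙 A₁ ∧
        PAttGHom.Matching mKp ∧
        IsFPBC lm mLm mKp l₁p := by
  classical
  obtain ⟨hstrict0, hinjL⟩ := hmatch
  have hstrict : ∀ x : S.obj Lo,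
      attG (S.map (PAttGHom.g mLm) x) = (attL x).map (T.map (PAttGHom.a mLm)) := hstrict0
  have sqG : IsPullback (PAttGHom.g lm) mK (PAttGHom.g mLm) l₁ := hfpbc.isPullback
  have sqS : IsPullback (S.map (PAttGHom.g lm)) (S.map mK)
      (S.map (PAttGHom.g mLm)) (S.map l₁) := S.map_isPullback sqG
  have hcomm : ∀ y : S.obj Ko,
      S.map (PAttGHom.g mLm) (S.map (PAttGHom.g lm) y) = S.map l₁ (S.map mK y) := by
    intro y
    simpa using types_congr_hom sqS.w y
  have hinjK : Function.Injective (S.map mK) := by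
    intro y y' h
    have h1' : S.map (PAttGHom.g lm) y = S.map (PAttGHom.g lm) y' := by
      apply hinjL
      rw [hcomm, hcomm, h]
    exact typePB_injective sqS h1' h
  refine ⟨hinjK, ?_, ?_⟩
  · intro x hx hr
    obtain ⟨z, hz⟩ := hr
    obtain ⟨p, hp1, hp2⟩ := typePB_exists sqS (x := z) (y := x) hz
    exact hx ⟨p, hp2⟩
  intro attD h1 h2
  -- the two new morphisms
  have condmK : ∀ (x : S.obj Ko) (t : T.obj A), t ∈ attK x →
      T.map (PAttGHom.a mLm) t ∈ attD (S.map mK x) := by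
    intro x t ht
    rw [h1 x]
    exact Part.mem_map _ ht
  have condl₁ : ∀ (x : S.obj Do) (t : T.obj A₁), t ∈ attD x →
      T.map (𝟙 A₁) t ∈ attG (S.map l₁ x) := by
    intro x t ht
    rw [FunctorToTypes.map_id_apply]
    by_cases hx : x ∈ Set.range (S.map mK)
    · obtain ⟨y, rfl⟩ := hx
      rw [h1 y] at ht
      obtain ⟨s, hs, rfl⟩ := (Part.mem_map_iff _).mp ht
      have hsL : s ∈ attL (S.map (PAttGHom.g lm) y) := by
        have h3 := PAttGHom.cond lm y s hs
        rwa [hlma, FunctorToTypes.map_id_apply] at h3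
      rw [← hcomm y, hstrict]
      exact Part.mem_map _ hsL
    · rw [h2 x hx] at ht
      exact ht
  obtain ⟨mKp, hmg, hma⟩ : ∃ h : (⟨Ko, A, attK⟩ : PAttGObj S T) ⟶ ⟨Do, A₁, attD⟩,
      PAttGHom.g h = mK ∧ PAttGHom.a h = PAttGHom.a mLm :=
    ⟨homMk (X := ⟨Ko, A, attK⟩) (Y := ⟨Do, A₁, attD⟩) mK (PAttGHom.a mLm : A ⟶ A₁) condmK, rfl, rfl⟩
  obtain ⟨l₁p, hlg, hla⟩ : ∃ h : (⟨Do, A₁, attD⟩ : PAttGObj S T) ⟶ ⟨Go, A₁, attG⟩,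
      PAttGHom.g h = l₁ ∧ PAttGHom.a h = 𝟙 A₁ :=
    ⟨homMk (X := ⟨Do, A₁, attD⟩) (Y := ⟨Go, A₁, attG⟩) l₁ (𝟙 A₁) condl₁, rfl, rfl⟩
  refine ⟨mKp, l₁p, hmg, hma, hlg, hla, ⟨?_, ?_⟩, ⟨?_, ?_⟩⟩
  · -- strictness of mKp
    intro x
    rw [hmg, hma]
    exact h1 x
  · -- injectivity of mKp
    rw [hmg]
    exact hinjK
  · -- the pullback square in PAttG
    have wsq : lm ≫ mLm = mKp ≫ l₁p := by
      apply PAttGHom.ext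
      · rw [PAttGHom.comp_g, PAttGHom.comp_g, hmg, hlg]
        exact sqG.w
      · rw [PAttGHom.comp_a, PAttGHom.comp_a, hlma, hma, hla,
          Category.id_comp, Category.comp_id]
    have wG : ∀ s : PullbackCone mLm l₁p,
        PAttGHom.g s.fst ≫ PAttGHom.g mLm = PAttGHom.g s.snd ≫ l₁ := by
      intro s
      have e := congrArg PAttGHom.g s.condition
      rw [PAttGHom.comp_g, PAttGHom.comp_g, hlg] at e
      exact e
    have wA : ∀ s : PullbackCone mLm l₁p,
        PAttGHom.a s.fst ≫ PAttGHom.a mLm = PAttGHom.a s.snd := by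
      intro s
      have e := congrArg PAttGHom.a s.condition
      rw [PAttGHom.comp_a, PAttGHom.comp_a, hla, Category.comp_id] at e
      exact e
    have liftCond : ∀ (s : PullbackCone mLm l₁p) (u : s.pt.base ⟶ Ko),
        u ≫ PAttGHom.g lm = PAttGHom.g s.fst → u ≫ mK = PAttGHom.g s.snd →
        ∀ (x : S.obj s.pt.base) (t : T.obj s.pt.attr), t ∈ s.pt.att x →
          T.map (PAttGHom.a s.fst) t ∈ attK (S.map u x) := by
      intro s u hu1 hu2 x t ht
      have hq : T.map (PAttGHom.a s.snd) t ∈ attD (S.map (PAttGHom.g s.snd) x) :=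
        PAttGHom.cond s.snd x t ht
      have hsnd : S.map (PAttGHom.g s.snd) x = S.map mK (S.map u x) := by
        rw [← FunctorToTypes.map_comp_apply, hu2]
      rw [hsnd, h1] at hq
      obtain ⟨sa, hsa, hsaeq⟩ := (Part.mem_map_iff _).mp hq
      have hp : T.map (PAttGHom.a s.fst) t ∈ attL (S.map (PAttGHom.g s.fst) x) :=
        PAttGHom.cond s.fst x t ht
      have hsL : sa ∈ attL (S.map (PAttGHom.g s.fst) x) := by
        have h3 := PAttGHom.cond lm (S.map u x) sa hsa
        rwa [hlma, FunctorToTypes.map_id_apply, ← FunctorToTypes.map_comp_apply, hu1] at h3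
      have heq : sa = T.map (PAttGHom.a s.fst) t := Part.mem_unique hsL hp
      exact heq ▸ hsa
    let LIFT : ∀ s : PullbackCone mLm l₁p, s.pt ⟶ (⟨Ko, A, attK⟩ : PAttGObj S T) :=
      fun s => homMk (X := s.pt) (Y := ⟨Ko, A, attK⟩)
        (sqG.lift (PAttGHom.g s.fst) (PAttGHom.g s.snd) (wG s) : s.pt.base ⟶ Ko)
        (PAttGHom.a s.fst : s.pt.attr ⟶ A)
        (liftCond s _ (sqG.lift_fst _ _ _) (sqG.lift_snd _ _ _))
    have hLIFTg : ∀ s, PAttGHom.g (LIFT s)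
        = sqG.lift (PAttGHom.g s.fst) (PAttGHom.g s.snd) (wG s) := fun _ => rfl
    have hLIFTa : ∀ s, PAttGHom.a (LIFT s) = PAttGHom.a s.fst := fun _ => rfl
    refine IsPullback.of_isLimit' ⟨wsq⟩ (PullbackCone.IsLimit.mk wsq LIFT ?_ ?_ ?_)
    · intro s
      apply PAttGHom.ext
      · rw [PAttGHom.comp_g, hLIFTg s, sqG.lift_fst]
      · rw [PAttGHom.comp_a, hLIFTa s, hlma, Category.comp_id]
    · intro s
      apply PAttGHom.ext
      · rw [PAttGHom.comp_g, hLIFTg s, hmg, sqG.lift_snd]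
      · rw [PAttGHom.comp_a, hLIFTa s, hma]
        exact wA s
    · intro s m hm1 hm2
      apply PAttGHom.ext
      · apply sqG.hom_ext
        · rw [hLIFTg s, sqG.lift_fst]
          have e := congrArg PAttGHom.g hm1
          rw [PAttGHom.comp_g] at e
          exact e
        · rw [hLIFTg s, sqG.lift_snd]
          have e := congrArg PAttGHom.g hm2
          rw [PAttGHom.comp_g, hmg] at e
          exact e
      · rw [hLIFTa s]
        have e := congrArg PAttGHom.a hm1
        rw [PAttGHom.comp_a, hlma, Category.comp_id] at e
        exact e
  · -- finality
    intro K' D' l' m' l'₁ hpb f hf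
    have hpbG : IsPullback (PAttGHom.g l') (PAttGHom.g m')
        (PAttGHom.g mLm) (PAttGHom.g l'₁) := (UG S T).map_isPullback hpb
    have hpbA : IsPullback (PAttGHom.a l') (PAttGHom.a m')
        (PAttGHom.a mLm) (PAttGHom.a l'₁) := (UA S T).map_isPullback hpb
    have hpbS : IsPullback (S.map (PAttGHom.g l')) (S.map (PAttGHom.g m'))
        (S.map (PAttGHom.g mLm)) (S.map (PAttGHom.g l'₁)) := S.map_isPullback hpbG
    have hpbT : IsPullback (T.map (PAttGHom.a l')) (T.map (PAttGHom.a m'))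
        (T.map (PAttGHom.a mLm)) (T.map (PAttGHom.a l'₁)) := T.map_isPullback hpbA
    have hfg : PAttGHom.g f ≫ PAttGHom.g lm = PAttGHom.g l' := by
      have e := congrArg PAttGHom.g hf
      rwa [PAttGHom.comp_g] at e
    have hfa : PAttGHom.a f = PAttGHom.a l' := by
      have e := congrArg PAttGHom.a hf
      rwa [PAttGHom.comp_a, hlma, Category.comp_id] at e
    obtain ⟨f₁g, ⟨hfl, hfr⟩, huniqG⟩ :=
      hfpbc.final (PAttGHom.g l') (PAttGHom.g m') (PAttGHom.g l'₁) hpbG (PAttGHom.g f) hfg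
    have condf₁ : ∀ (y : S.obj D'.base) (t : T.obj D'.attr), t ∈ D'.att y →
        T.map (PAttGHom.a l'₁) t ∈ attD (S.map f₁g y) := by
      intro y t ht
      have hG : T.map (PAttGHom.a l'₁) t ∈ attG (S.map (PAttGHom.g l'₁) y) :=
        PAttGHom.cond l'₁ y t ht
      by_cases hy : S.map f₁g y ∈ Set.range (S.map mK)
      · obtain ⟨k, hk⟩ := hy
        rw [← hk, h1 k]
        have e1 : S.map (PAttGHom.g l'₁) y
            = S.map (PAttGHom.g mLm) (S.map (PAttGHom.g lm) k) := by
          rw [hcomm k, hk, ← FunctorToTypes.map_comp_apply, hfl]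
        rw [e1, hstrict] at hG
        obtain ⟨s, hsmem, hseq⟩ := (Part.mem_map_iff _).mp hG
        obtain ⟨x', hx1, hx2⟩ := typePB_exists hpbS e1.symm
        obtain ⟨τ, hτ1, hτ2⟩ := typePB_exists hpbT hseq
        have condL'' : ∀ (x'' : S.obj K'.base) (u : T.obj K'.attr),
            u ∈ (if x'' = x' then Part.some τ else K'.att x'') →
            T.map (PAttGHom.a l') u ∈ attL (S.map (PAttGHom.g l') x'') := by
          intro x'' u hu
          by_cases hxx : x'' = x'
          · rw [if_pos hxx] at hu
            rw [Part.mem_some_iff] at hu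
            subst hu; subst hxx
            rw [hx1, hτ1]
            exact hsmem
          · rw [if_neg hxx] at hu
            exact PAttGHom.cond l' x'' u hu
        have condM'' : ∀ (x'' : S.obj K'.base) (u : T.obj K'.attr),
            u ∈ (if x'' = x' then Part.some τ else K'.att x'') →
            T.map (PAttGHom.a m') u ∈ D'.att (S.map (PAttGHom.g m') x'') := by
          intro x'' u hu
          by_cases hxx : x'' = x'
          · rw [if_pos hxx] at hu
            rw [Part.mem_some_iff] at hu
            subst hu; subst hxx
            rw [hx2, hτ2]
            exact ht
          · rw [if_neg hxx] at hu
            exact PAttGHom.cond m' x'' u hu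
        obtain ⟨l'', hl''g, hl''a⟩ :
            ∃ h : (⟨K'.base, K'.attr, fun x'' => if x'' = x' then Part.some τ else K'.att x''⟩ :
              PAttGObj S T) ⟶ (⟨Lo, A, attL⟩ : PAttGObj S T),
              PAttGHom.g h = PAttGHom.g l' ∧ PAttGHom.a h = PAttGHom.a l' :=
          ⟨homMk (X := ⟨K'.base, K'.attr, fun x'' => if x'' = x' then Part.some τ else K'.att x''⟩)
            (Y := ⟨Lo, A, attL⟩) (PAttGHom.g l' : K'.base ⟶ Lo) (PAttGHom.a l' : K'.attr ⟶ A) condL'', rfl, rfl⟩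
        obtain ⟨m'', hm''g, hm''a⟩ :
            ∃ h : (⟨K'.base, K'.attr, fun x'' => if x'' = x' then Part.some τ else K'.att x''⟩ :
              PAttGObj S T) ⟶ D',
              PAttGHom.g h = PAttGHom.g m' ∧ PAttGHom.a h = PAttGHom.a m' :=
          ⟨homMk (X := ⟨K'.base, K'.attr, fun x'' => if x'' = x' then Part.some τ else K'.att x''⟩)
            (Y := D') (PAttGHom.g m' : K'.base ⟶ D'.base) (PAttGHom.a m' : K'.attr ⟶ D'.attr) condM'', rfl, rfl⟩
        have wZ : l'' ≫ mLm = m'' ≫ l'₁ := by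
          apply PAttGHom.ext
          · rw [PAttGHom.comp_g, PAttGHom.comp_g, hl''g, hm''g]
            exact hpbG.w
          · rw [PAttGHom.comp_a, PAttGHom.comp_a, hl''a, hm''a]
            exact hpbA.w
        have hufst := hpb.lift_fst l'' m'' wZ
        have husnd := hpb.lift_snd l'' m'' wZ
        have hug : PAttGHom.g (hpb.lift l'' m'' wZ) = 𝟙 K'.base := by
          apply hpbG.hom_ext
          · have e := congrArg PAttGHom.g hufst
            rw [PAttGHom.comp_g, hl''g] at e
            rw [e, Category.id_comp]
          · have e := congrArg PAttGHom.g husnd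
            rw [PAttGHom.comp_g, hm''g] at e
            rw [e, Category.id_comp]
        have hua : PAttGHom.a (hpb.lift l'' m'' wZ) = 𝟙 K'.attr := by
          apply hpbA.hom_ext
          · have e := congrArg PAttGHom.a hufst
            rw [PAttGHom.comp_a, hl''a] at e
            rw [e, Category.id_comp]
          · have e := congrArg PAttGHom.a husnd
            rw [PAttGHom.comp_a, hm''a] at e
            rw [e, Category.id_comp]
        have hτZ : τ ∈ (if x' = x' then Part.some τ else K'.att x') := by
          rw [if_pos rfl]
          exact Part.mem_some τ
        have hτmem : τ ∈ K'.att x' := by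
          have hc := PAttGHom.cond (hpb.lift l'' m'' wZ) x' τ hτZ
          rwa [hug, hua, FunctorToTypes.map_id_apply, FunctorToTypes.map_id_apply] at hc
        have hfgx : S.map (PAttGHom.g f) x' = k := by
          apply typePB_injective sqS
          · rw [← FunctorToTypes.map_comp_apply, hfg, hx1]
          · rw [← FunctorToTypes.map_comp_apply, ← hfr, FunctorToTypes.map_comp_apply,
              hx2, ← hk]
        have hsK : s ∈ attK k := by
          have hc : T.map (PAttGHom.a f) τ ∈ attK (S.map (PAttGHom.g f) x') :=
            PAttGHom.cond f x' τ hτmem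
          rwa [hfgx, hfa, hτ1] at hc
        exact (Part.mem_map_iff _).mpr ⟨s, hsK, hseq⟩
      · rw [h2 _ hy, ← FunctorToTypes.map_comp_apply, hfl]
        exact hG
    refine ⟨homMk (X := D') (Y := ⟨Do, A₁, attD⟩) f₁g (PAttGHom.a l'₁ : D'.attr ⟶ A₁) condf₁, ⟨?_, ?_⟩, ?_⟩
    · apply PAttGHom.ext
      · rw [PAttGHom.comp_g, hlg]
        exact hfl
      · rw [PAttGHom.comp_a, hla, Category.comp_id]
        rfl
    · apply PAttGHom.ext
      · rw [PAttGHom.comp_g, PAttGHom.comp_g, hmg]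
        exact hfr
      · rw [PAttGHom.comp_a, PAttGHom.comp_a, hma, hfa]
        exact hpbA.w.symm
    · intro f₁' hAB
      obtain ⟨hA, hB⟩ := hAB
      apply PAttGHom.ext
      · have e1 := congrArg PAttGHom.g hA
        rw [PAttGHom.comp_g, hlg] at e1
        have e2 := congrArg PAttGHom.g hB
        rw [PAttGHom.comp_g, PAttGHom.comp_g, hmg] at e2
        exact huniqG _ ⟨e1, e2⟩
      · have e := congrArg PAttGHom.a hA
        rw [PAttGHom.comp_a, hla, Category.comp_id] at e
        exact e


end AttStruct
end

section
/- In the category of types, for any types X, X', C and any function f : X' → X, the square with top f : X' → X, left Sum.inl : X → X ⊕ C, right Sum.inl : X' → X' ⊕ C and bottom Sum.map f id : X' ⊕ C → X ⊕ C is a final pullback complement of Sum.inl : X → X ⊕ C along f. -/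
open CategoryTheory CategoryTheory.Limits

universe u

/-- A final pullback complement (FPBC) of `mL : L ⟶ G` along `l : K ⟶ L`: a pullback
square `mK : K ⟶ D`, `l₁ : D ⟶ G` such that every pullback of `mL` along some
`l' : K' ⟶ L` factors uniquely through it, compatibly with any `f : K' ⟶ K` over `L`. -/
structure IsFPBC {𝒞 : Type*} [Category 𝒞] {K L D G : 𝒞}
    (l : K ⟶ L) (mL : L ⟶ G) (mK : K ⟶ D) (l₁ : D ⟶ G) : Prop where
  isPullback : IsPullback l mK mL l₁
  final : ∀ {K' D' : 𝒞} (l' : K' ⟶ L) (m' : K' ⟶ D') (l'₁ : D' ⟶ G),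
    IsPullback l' m' mL l'₁ → ∀ f : K' ⟶ K, f ≫ l = l' →
      ∃! f₁ : D' ⟶ D, f₁ ≫ l₁ = l'₁ ∧ m' ≫ f₁ = f ≫ mK

/-- In types, the square with top `f`, coprojections on the sides and `Sum.map f id`
on the bottom is a final pullback complement of `Sum.inl` along `f`. -/
theorem isFPBC_inl_sumMap {X X' C : Type u} (f : X' → X) :
    IsFPBC (𝒞 := Type u) (TypeCat.ofHom f) (TypeCat.ofHom (Sum.inl : X → X ⊕ C))
      (TypeCat.ofHom (Sum.inl : X' → X' ⊕ C))
      (TypeCat.ofHom (Sum.map f id : X' ⊕ C → X ⊕ C)) := by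
  have hcomm : ∀ x : X', (Sum.inl (f x) : X ⊕ C) = Sum.map f id (Sum.inl x) := fun x => rfl
  constructor
  · refine IsPullback.of_isLimit' ⟨by ext x; exact hcomm x⟩ ?_
    refine (PullbackCone.isLimitEquivBijective _).symm ?_
    constructor
    · intro a b hab
      have := congrArg (fun p => p.1.2) hab
      exact Sum.inl_injective this
    · rintro ⟨⟨x, d⟩, hd⟩
      obtain (x' | c) := d
      · refine ⟨x', ?_⟩
        apply Subtype.ext
        have : f x' = x := by simpa [Sum.map] using hd.symm
        simp [PullbackCone.toPullbackObj, this]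
        exact ⟨this, rfl⟩
      · simp [Sum.map] at hd
  · intro K' D' l' m' l'₁ hpb g hg
    have hbij := (PullbackCone.isLimitEquivBijective _) hpb.isLimit
    set e : K' ≃ Types.PullbackObj (TypeCat.ofHom (Sum.inl : X → X ⊕ C)) l'₁ :=
      Equiv.ofBijective _ hbij with he
    -- e : K' ≃ {p : X × D' // Sum.inl p.1 = l'₁ p.2}
    have hfst : ∀ k, l' k = (e k).1.1 := fun k => rfl
    have hsnd : ∀ k, m' k = (e k).1.2 := fun k => rfl
    classical
    refine ⟨TypeCat.ofHom (fun d => match h : l'₁ d with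
      | Sum.inl x => Sum.inl (g (e.symm ⟨(x, d), h.symm⟩))
      | Sum.inr c => Sum.inr c), ⟨?_, ?_⟩, ?_⟩
    · refine ConcreteCategory.hom_ext _ _ fun d => ?_
      simp only [types_comp_apply, TypeCat.ofHom_apply]
      split
      next x h =>
        have : f (g (e.symm ⟨(x, d), h.symm⟩)) = x := by
          have := types_congr_hom hg (e.symm ⟨(x, d), h.symm⟩)
          simp only [types_comp_apply, TypeCat.ofHom_apply] at this
          rw [this, hfst]
          simp [he]
        simp [Sum.map, this, h]
      next c h => simp [h, Sum.map]
    · refine ConcreteCategory.hom_ext _ _ fun k => ?_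
      simp only [types_comp_apply, TypeCat.ofHom_apply]
      have hl : l'₁ (m' k) = Sum.inl (l' k) := (types_congr_hom hpb.w k).symm
      -- reduce the match
      have : (⟨(l' k, m' k), hl.symm⟩ : {p : X × D' // Sum.inl p.1 = l'₁ p.2}) = e k := by
        apply Subtype.ext; exact Prod.ext (hfst k).symm (hsnd k).symm
      split
      next x h =>
        have hx : x = l' k := by rw [h] at hl; exact Sum.inl.inj hl
        subst hx
        have he' : (⟨(l' k, m' k), h.symm⟩ : {p : X × D' // Sum.inl p.1 = l'₁ p.2}) = e k := this
        simp only [he', Equiv.symm_apply_apply]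
      next c h => rw [h] at hl; exact absurd hl (by simp)
    · intro f₁ ⟨h1, h2⟩
      refine ConcreteCategory.hom_ext _ _ fun d => ?_
      simp only [TypeCat.ofHom_apply]
      split
      next x h =>
        have hk : m' (e.symm ⟨(x, d), h.symm⟩) = d := by
          rw [hsnd]; simp [he]
        have := types_congr_hom h2 (e.symm ⟨(x, d), h.symm⟩)
        simp only [types_comp_apply, hk, TypeCat.ofHom_apply] at this
        rw [this]
      next c h =>
        have := types_congr_hom h1 d
        simp only [types_comp_apply, h] at this
        rcases hd : f₁ d with x' | c'
        · rw [hd] at this; simp [Sum.map] at this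
        · rw [hd] at this; simpa using this
end

section
/- In the category of types, let X, X', C, Y' be types, f : X' → X, i' : X' → Y' and f₁ : Y' → X ⊕ C functions such that the square with top f, left Sum.inl : X → X ⊕ C, right i' and bottom f₁ is a pullback (so that, for every y' ∈ Y' outside the range of i', f₁(y') lies in the range of Sum.inr, yielding an induced function γ from the complement of the range of i' in Y' to C with f₁(y') = Sum.inr(γ(y'))). Then this pullback square is a final pullback complement of Sum.inl : X → X ⊕ C along f if and only if the induced function γ is a bijection. -/
open CategoryTheory CategoryTheory.Limits

universe u

namespace FPBCAux

lemma hext {X Y : Type u} {f g : X ⟶ Y} (h : ∀ x, f x = g x) : f = g :=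
  ConcreteCategory.hom_ext _ _ h

variable {P A B Q : Type u} {fst : P ⟶ A} {snd : P ⟶ B} {g : A ⟶ Q} {h : B ⟶ Q}

lemma exists_elt (H : IsPullback (C := Type u) fst snd g h) {a : A} {b : B}
    (hab : g a = h b) : ∃ p, fst p = a ∧ snd p = b :=
  ⟨H.lift (W := PUnit) (TypeCat.ofHom fun _ => a) (TypeCat.ofHom fun _ => b)
      (hext fun _ => hab) PUnit.unit,
    types_congr_hom (H.lift_fst (TypeCat.ofHom fun _ => a) (TypeCat.ofHom fun _ => b)
      (hext fun _ => hab)) PUnit.unit,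
    types_congr_hom (H.lift_snd (TypeCat.ofHom fun _ => a) (TypeCat.ofHom fun _ => b)
      (hext fun _ => hab)) PUnit.unit⟩

lemma elt_ext (H : IsPullback (C := Type u) fst snd g h) {p q : P}
    (h1 : fst p = fst q) (h2 : snd p = snd q) : p = q := by
  have key : (TypeCat.ofHom fun _ : PUnit.{u+1} => p) = TypeCat.ofHom (fun _ => q) :=
    H.hom_ext (hext fun _ => h1) (hext fun _ => h2)
  exact types_congr_hom key PUnit.unit

lemma isPullback_mk (comm : ∀ p, g (fst p) = h (snd p))
    (uniq : ∀ p q, fst p = fst q → snd p = snd q → p = q)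
    (ex : ∀ a b, g a = h b → ∃ p, fst p = a ∧ snd p = b) :
    IsPullback (C := Type u) fst snd g h := by
  have comm' : (fst ≫ g : P ⟶ Q) = snd ≫ h := hext comm
  exact IsPullback.of_isLimit (PullbackCone.IsLimit.mk comm'
    (fun s => TypeCat.ofHom fun w =>
      Classical.choose (ex (s.fst w) (s.snd w) (types_congr_hom s.condition w)))
    (fun s => hext fun w =>
      (Classical.choose_spec (ex (s.fst w) (s.snd w) (types_congr_hom s.condition w))).1)
    (fun s => hext fun w =>
      (Classical.choose_spec (ex (s.fst w) (s.snd w) (types_congr_hom s.condition w))).2)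
    (fun s m hm1 hm2 => hext fun w => by
      apply uniq
      · exact (types_congr_hom hm1 w).trans
          ((Classical.choose_spec (ex (s.fst w) (s.snd w)
            (types_congr_hom s.condition w))).1).symm
      · exact (types_congr_hom hm2 w).trans
          ((Classical.choose_spec (ex (s.fst w) (s.snd w)
            (types_congr_hom s.condition w))).2).symm))

end FPBCAux

open FPBCAux in
/-- Given a pullback of `Sum.inl : X → X ⊕ C` along `f` in types, with the induced
map `γ` from the complement of the range of `i'` to `C`, the square is a final
pullback complement iff `γ` is a bijection. -/
theorem isFPBC_iff_bijective_gamma {X X' C Y' : Type u}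
    (f : X' → X) (i' : X' → Y') (f₁ : Y' → X ⊕ C)
    (hpb : IsPullback (C := Type u) (TypeCat.ofHom f) (TypeCat.ofHom i')
      (TypeCat.ofHom Sum.inl) (TypeCat.ofHom f₁))
    (γ : {y' : Y' // y' ∉ Set.range i'} → C)
    (hγ : ∀ y' : {y' : Y' // y' ∉ Set.range i'}, f₁ y'.1 = Sum.inr (γ y')) :
    IsFPBC (𝒞 := Type u) (TypeCat.ofHom f) (TypeCat.ofHom (Sum.inl : X → X ⊕ C))
      (TypeCat.ofHom i') (TypeCat.ofHom f₁) ↔ Function.Bijective γ := by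
  classical
  have comm : ∀ x', Sum.inl (f x') = f₁ (i' x') := fun x' => types_congr_hom hpb.w x'
  constructor
  · -- FPBC → bijective
    intro hF
    -- the canonical pullback square over X' ⊕ C
    have ispb₀ : IsPullback (C := Type u) (TypeCat.ofHom f)
        (TypeCat.ofHom (Sum.inl : X' → X' ⊕ C))
        (TypeCat.ofHom (Sum.inl : X → X ⊕ C)) (TypeCat.ofHom (Sum.map f id)) := by
      apply isPullback_mk
      · intro p; rfl
      · intro p q _ h2; exact Sum.inl.inj h2
      · rintro a (x' | c) hab
        · exact ⟨x', Sum.inl.inj hab.symm, rfl⟩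
        · simp at hab
    obtain ⟨φ, ⟨hφ1, hφ2⟩, -⟩ :=
      hF.final (TypeCat.ofHom f) (TypeCat.ofHom (Sum.inl : X' → X' ⊕ C))
          (TypeCat.ofHom (Sum.map f id)) ispb₀ (𝟙 X') (hext fun _ => rfl)
    have hφ1' : ∀ s, f₁ (φ s) = Sum.map f id s := fun s => types_congr_hom hφ1 s
    have hφ2' : ∀ x', φ (Sum.inl x') = i' x' := fun x' => types_congr_hom hφ2 x'
    have hnot : ∀ c : C, φ (Sum.inr c) ∉ Set.range i' := by
      rintro c ⟨x', hx⟩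
      have := hφ1' (Sum.inr c)
      rw [← hx, ← comm x'] at this
      simp at this
    have hγφ : ∀ c, γ ⟨φ (Sum.inr c), hnot c⟩ = c := by
      intro c
      have h1 := hγ ⟨φ (Sum.inr c), hnot c⟩
      have h2 := hφ1' (Sum.inr c)
      simp only [Sum.map_inr, id] at h2
      rw [h2] at h1
      exact (Sum.inr.inj h1).symm
    -- uniqueness against the identity
    obtain ⟨ψ, -, huniq⟩ := hF.final (TypeCat.ofHom f) (TypeCat.ofHom i') (TypeCat.ofHom f₁) hpb (𝟙 X')
      (hext fun _ => rfl)
    have hid : (𝟙 Y') = ψ := huniq (𝟙 Y') ⟨hext fun _ => rfl, hext fun _ => rfl⟩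
    set Ψ : Y' → Y' := fun y' =>
      if hy : y' ∈ Set.range i' then y' else φ (Sum.inr (γ ⟨y', hy⟩)) with hΨ
    have hΨeq : TypeCat.ofHom Ψ = ψ := by
      apply huniq
      constructor
      · apply hext; intro y'
        show f₁ (Ψ y') = f₁ y'
        by_cases hy : y' ∈ Set.range i'
        · simp only [hΨ]
          rw [dif_pos hy]
        · simp only [hΨ]
          rw [dif_neg hy]
          rw [hφ1' (Sum.inr (γ ⟨y', hy⟩))]
          simp [hγ ⟨y', hy⟩]
      · apply hext; intro x'
        show Ψ (i' x') = i' ((𝟙 X') x')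
        simp [hΨ, Set.mem_range_self]
    have hΨid : TypeCat.ofHom Ψ = 𝟙 Y' := hΨeq.trans hid.symm
    have key : ∀ (y : {y' : Y' // y' ∉ Set.range i'}), φ (Sum.inr (γ y)) = y.1 := by
      intro y
      have h : Ψ y.1 = y.1 := types_congr_hom hΨid y.1
      simp only [hΨ] at h
      rw [dif_neg y.2] at h
      exact h
    constructor
    · intro a b hab
      apply Subtype.ext
      rw [← key a, ← key b, hab]
    · intro c
      exact ⟨⟨φ (Sum.inr c), hnot c⟩, hγφ c⟩
  · -- bijective → FPBC
    intro hb
    set e := Equiv.ofBijective γ hb with he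
    refine ⟨hpb, ?_⟩
    intro K' D' l' m' l'₁ hpb' gg hg
    have hg' : ∀ k', f (gg k') = l' k' := fun k' => types_congr_hom hg k'
    have comm' : ∀ k', Sum.inl (l' k') = l'₁ (m' k') := fun k' => types_congr_hom hpb'.w k'
    have m'_inj : Function.Injective m' := by
      intro a b hab
      apply elt_ext hpb' _ hab
      have : (Sum.inl (l' a) : X ⊕ C) = Sum.inl (l' b) := by rw [comm', comm', hab]
      exact Sum.inl.inj this
    have hnr : ∀ d' : D', (¬ ∃ k', m' k' = d') → ∃ c, l'₁ d' = Sum.inr c := by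
      intro d' hd
      cases hc : l'₁ d' with
      | inl x =>
        obtain ⟨p, -, hp⟩ := exists_elt hpb' (a := x) (b := d') hc.symm
        exact absurd ⟨p, hp⟩ hd
      | inr c => exact ⟨c, rfl⟩
    set F : D' → Y' := fun d' =>
      if hd : ∃ k', m' k' = d' then i' (gg (Classical.choose hd))
      else (e.symm (Classical.choose (hnr d' hd))).1 with hFdef
    have hF2 : ∀ k', F (m' k') = i' (gg k') := by
      intro k'
      have hd : ∃ k'', m' k'' = m' k' := ⟨k', rfl⟩
      have hk := Classical.choose_spec hd
      have : Classical.choose hd = k' := m'_inj hk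
      simp only [hFdef, dif_pos hd, this]
    have hF1 : ∀ d', f₁ (F d') = l'₁ d' := by
      intro d'
      by_cases hd : ∃ k', m' k' = d'
      · have hk := Classical.choose_spec hd
        simp only [hFdef, dif_pos hd]
        rw [← comm, hg', comm', hk]
      · simp only [hFdef, dif_neg hd]
        rw [hγ (e.symm (Classical.choose (hnr d' hd)))]
        have : γ (e.symm (Classical.choose (hnr d' hd))) = Classical.choose (hnr d' hd) :=
          e.apply_symm_apply (Classical.choose (hnr d' hd))
        rw [this, ← Classical.choose_spec (hnr d' hd)]
    refine ⟨TypeCat.ofHom F, ⟨hext hF1, hext fun k' => ?_⟩, ?_⟩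
    · show F (m' k') = i' (gg k')
      exact hF2 k'
    · rintro F' ⟨h1, h2⟩
      have h1' : ∀ d', f₁ (F' d') = l'₁ d' := fun d' => types_congr_hom h1 d'
      have h2' : ∀ k', F' (m' k') = i' (gg k') := fun k' => types_congr_hom h2 k'
      apply hext; intro d'
      show F' d' = F d'
      by_cases hd : ∃ k', m' k' = d'
      · obtain ⟨k', rfl⟩ := hd
        rw [h2' k', hF2 k']
      · simp only [hFdef, dif_neg hd]
        set c := Classical.choose (hnr d' hd) with hc
        have hcd : l'₁ d' = Sum.inr c := Classical.choose_spec (hnr d' hd)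
        have hmem : F' d' ∉ Set.range i' := by
          rintro ⟨x', hx⟩
          have := h1' d'
          rw [← hx, ← comm x', hcd] at this
          simp at this
        have hγy : γ ⟨F' d', hmem⟩ = c := by
          have := hγ ⟨F' d', hmem⟩
          rw [h1' d', hcd] at this
          exact (Sum.inr.inj this).symm
        have : (⟨F' d', hmem⟩ : {y' : Y' // y' ∉ Set.range i'}) = e.symm c := by
          apply e.injective
          simp only [Equiv.apply_symm_apply]
          exact hγy
        exact congrArg Subtype.val this
end

section
/- In any category, final pullback complements are unique up to isomorphism: if both (m_K : K → D, l₁ : D → G) and (m'_K : K → D', l'₁ : D' → G) are final pullback complements of a morphism m_L : L → G along a morphism l : K → L, then there exists an isomorphism h : D ≅ D' such that l'₁ ∘ h = l₁ and h ∘ m_K = m'_K. -/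
open CategoryTheory CategoryTheory.Limits

universe v u

/-- Final pullback complements are unique up to isomorphism. -/
theorem isFPBC_unique_up_to_iso {𝒞 : Type u} [Category.{v} 𝒞] {K L D D' G : 𝒞}
    (l : K ⟶ L) (mL : L ⟶ G) (mK : K ⟶ D) (l₁ : D ⟶ G) (mK' : K ⟶ D') (l₁' : D' ⟶ G)
    (h : IsFPBC l mL mK l₁) (h' : IsFPBC l mL mK' l₁') :
    ∃ e : D ≅ D', e.hom ≫ l₁' = l₁ ∧ mK ≫ e.hom = mK' := by
  obtain ⟨u, ⟨hu1, hu2⟩, -⟩ := h'.final l mK l₁ h.isPullback (𝟙 K) (Category.id_comp l)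
  obtain ⟨v, ⟨hv1, hv2⟩, -⟩ := h.final l mK' l₁' h'.isPullback (𝟙 K) (Category.id_comp l)
  obtain ⟨w, -, hw⟩ := h.final l mK l₁ h.isPullback (𝟙 K) (Category.id_comp l)
  obtain ⟨w', -, hw'⟩ := h'.final l mK' l₁' h'.isPullback (𝟙 K) (Category.id_comp l)
  have huv : u ≫ v = 𝟙 D := by
    rw [hw (u ≫ v) ⟨by rw [Category.assoc, hv1, hu1],
        by rw [← Category.assoc, hu2, Category.id_comp, hv2]⟩,
      hw (𝟙 D) ⟨Category.id_comp _, by simp⟩]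
  have hvu : v ≫ u = 𝟙 D' := by
    rw [hw' (v ≫ u) ⟨by rw [Category.assoc, hu1, hv1],
        by rw [← Category.assoc, hv2, Category.id_comp, hu2]⟩,
      hw' (𝟙 D') ⟨Category.id_comp _, by simp⟩]
  exact ⟨⟨u, v, huv, hvu⟩, hu1, by simpa using hu2⟩
end

section
/- Suppose the category 𝐀 has an initial object A₀ such that the set T(A₀) is empty. Then the projection functor U_𝐆 : PAttG ⥤ 𝐆 has a left adjoint, namely the functor sending an object G of 𝐆 to the partially attributed structure (G, A₀, ∅) whose attribution partial function is nowhere defined, and sending a morphism g : G → G' to (g, id_{A₀}). Consequently U_𝐆 preserves all limits, and in particular pullbacks. -/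
open CategoryTheory CategoryTheory.Limits

universe w v u v' u'

namespace AttStruct

variable {𝒢 : Type u} [Category.{v} 𝒢] {𝒜 : Type u'} [Category.{v'} 𝒜]

variable {S : 𝒢 ⥤ Type w} {T : 𝒜 ⥤ Type w}

/-- The functor sending `G` to the partially attributed structure `(G, A₀, ∅)`
with nowhere-defined attribution, and `g` to `(g, 𝟙 A₀)`. -/
def FreeG (S : 𝒢 ⥤ Type w) (T : 𝒜 ⥤ Type w) (A₀ : 𝒜) : 𝒢 ⥤ PAttGObj S T where
  obj Go := ⟨Go, A₀, fun _ => Part.none⟩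
  map g := ⟨g, 𝟙 A₀, fun _ t ht => absurd ht (Part.notMem_none t)⟩
  map_id _ := by apply PAttGHom.ext <;> simp
  map_comp _ _ := by apply PAttGHom.ext <;> simp

universe w₂ w₁

/-- If `𝒜` has an initial object `A₀` with `T(A₀)` empty, then the projection
functor `U_𝒢 : PAttG ⥤ 𝒢` has `FreeG S T A₀` as a left adjoint; consequently it
preserves all limits, in particular pullbacks. -/
theorem UG_hasLeftAdjoint_and_preservesLimits
    (S : 𝒢 ⥤ Type w) (T : 𝒜 ⥤ Type w) (A₀ : 𝒜)
    (hinit : IsInitial A₀) (hempty : IsEmpty (T.obj A₀)) :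
    Nonempty (FreeG S T A₀ ⊣ UG S T) ∧
      Nonempty (PreservesLimitsOfSize.{w₂, w₁} (UG S T)) ∧
      Nonempty (PreservesLimitsOfShape WalkingCospan (UG S T)) := by
  have adj : FreeG S T A₀ ⊣ UG S T :=
    Adjunction.mkOfHomEquiv
      { homEquiv := fun G X =>
          { toFun := fun f => f.g
            invFun := fun g =>
              ⟨g, hinit.to X.attr, fun _ t ht => absurd ht (Part.notMem_none t)⟩
            left_inv := fun f => by
              apply PAttGHom.ext
              · rfl
              · exact hinit.hom_ext _ _
            right_inv := fun g => rfl }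
        homEquiv_naturality_left_symm := fun f g => by
          apply PAttGHom.ext
          · rfl
          · exact hinit.hom_ext _ _
        homEquiv_naturality_right := fun f g => rfl }
  have : (UG S T).IsRightAdjoint := ⟨_, ⟨adj⟩⟩
  exact ⟨⟨adj⟩, ⟨adj.rightAdjoint_preservesLimits⟩, ⟨inferInstance⟩⟩

end AttStruct
end

section
/- Suppose the category 𝐆 has an initial object G₀ such that the set S(G₀) is empty. Then the projection functor U_𝐀 : PAttG ⥤ 𝐀 has a left adjoint, namely the functor sending an object A of 𝐀 to the partially attributed structure (G₀, A, ∅) whose attribution partial function is nowhere defined, and sending a morphism a : A → A' to (id_{G₀}, a). Consequently U_𝐀 preserves all limits, and in particular pullbacks. -/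
open CategoryTheory CategoryTheory.Limits

universe w v u v' u'

namespace AttStruct

variable {𝒢 : Type u} [Category.{v} 𝒢] {𝒜 : Type u'} [Category.{v'} 𝒜]

variable {S : 𝒢 ⥤ Type w} {T : 𝒜 ⥤ Type w}

/-- The functor sending `A` to the partially attributed structure `(G₀, A, ∅)`
with nowhere-defined attribution, and `a` to `(𝟙 G₀, a)`. -/
def FreeA (S : 𝒢 ⥤ Type w) (T : 𝒜 ⥤ Type w) (G₀ : 𝒢) : 𝒜 ⥤ PAttGObj S T where
  obj Ao := ⟨G₀, Ao, fun _ => Part.none⟩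
  map a := ⟨𝟙 G₀, a, fun _ t ht => absurd ht (Part.notMem_none t)⟩
  map_id _ := by apply PAttGHom.ext <;> simp
  map_comp _ _ := by apply PAttGHom.ext <;> simp

universe w₂ w₁

/-- If `𝒢` has an initial object `G₀` with `S(G₀)` empty, then the projection
functor `U_𝒜 : PAttG ⥤ 𝒜` has `FreeA S T G₀` as a left adjoint; consequently it
preserves all limits, in particular pullbacks. -/
theorem UA_hasLeftAdjoint_and_preservesLimits
    (S : 𝒢 ⥤ Type w) (T : 𝒜 ⥤ Type w) (G₀ : 𝒢)
    (hinit : IsInitial G₀) (hempty : IsEmpty (S.obj G₀)) :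
    Nonempty (FreeA S T G₀ ⊣ UA S T) ∧
      Nonempty (PreservesLimitsOfSize.{w₂, w₁} (UA S T)) ∧
      Nonempty (PreservesLimitsOfShape WalkingCospan (UA S T)) := by
  have adj : FreeA S T G₀ ⊣ UA S T := Adjunction.mkOfHomEquiv
    { homEquiv := fun A X =>
        { toFun := fun f => f.a
          invFun := fun a => ⟨hinit.to X.base, a,
            fun x _ _ => (hempty.false x).elim⟩
          left_inv := fun f => by
            apply PAttGHom.ext
            · exact hinit.hom_ext _ _
            · rfl
          right_inv := fun a => rfl }
      homEquiv_naturality_left_symm := fun f g => by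
        apply PAttGHom.ext
        · exact hinit.hom_ext _ _
        · rfl
      homEquiv_naturality_right := fun f g => rfl }
  exact ⟨⟨adj⟩, ⟨adj.rightAdjoint_preservesLimits⟩,
    ⟨adj.rightAdjoint_preservesLimits.preservesLimitsOfShape⟩⟩

end AttStruct
end
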